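/- arXiv:2106.13949 — 7 statements merged into one kernel-verified Lean document; each statement's English description precedes it below -/
import Mathlib

section
/- Let A be a bounded linear operator on a complex Hilbert space H. Then w(A) ≥ (1/2)‖A‖ + (1/(2√2)) | ‖Re(A) + Im(A)‖ − ‖Re(A) − Im(A)‖ |, where w denotes the numerical radius, ‖·‖ the operator norm, Re(A) = (A + A*)/2 and Im(A) = (A − A*)/(2i). -/
open ContinuousLinearMap Complex

variable {H : Type*} [NormedAddCommGroup H] [InnerProductSpace ℂ H] [CompleteSpace H]

noncomputable def nrad (A : H →L[ℂ] H) : ℝ :=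
  ⨆ x : {x : H // ‖x‖ = 1}, ‖(inner ℂ (A x) (x : H) : ℂ)‖

noncomputable def reP (A : H →L[ℂ] H) : H →L[ℂ] H := (2 : ℂ)⁻¹ • (A + adjoint A)
noncomputable def imP (A : H →L[ℂ] H) : H →L[ℂ] H := (2 * Complex.I)⁻¹ • (A - adjoint A)

noncomputable def oabs (A : H →L[ℂ] H) : H →L[ℂ] H := cfc Real.sqrt (adjoint A * A)

noncomputable def opow (T : H →L[ℂ] H) (r : ℝ) : H →L[ℂ] H := cfc (fun t : ℝ => t ^ r) T

set_option linter.unusedSectionVars false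

local notation "⟪" x ", " y "⟫" => @inner ℂ _ _ x y

-- selfadjoint norm bound via polarization
lemma sa_norm_le (T : H →L[ℂ] H) (hT : IsSelfAdjoint T) (M : ℝ) (hM : 0 ≤ M)
    (h : ∀ x : H, |(⟪T x, x⟫ : ℂ).re| ≤ M * ‖x‖ ^ 2) : ‖T‖ ≤ M := by
  refine opNorm_le_bound T hM fun x => ?_
  rcases eq_or_ne (T x) 0 with h0 | h0
  · simp [h0]; positivity
  have hx0 : x ≠ 0 := by rintro rfl; simp at h0
  have hsym : ∀ u v : H, (⟪T u, v⟫ : ℂ).re = (⟪T v, u⟫ : ℂ).re := by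
    intro u v
    rw [hT.isSymmetric.apply_clm u v, ← inner_conj_symm u (T v)]
    exact Complex.conj_re _
  have key : ∀ y : H, (⟪T x, y⟫ : ℂ).re ≤ M / 2 * (‖x‖ ^ 2 + ‖y‖ ^ 2) := by
    intro y
    have e1 : ((⟪T (x + y), x + y⟫ : ℂ)).re - ((⟪T (x - y), x - y⟫ : ℂ)).re
        = 4 * (⟪T x, y⟫ : ℂ).re := by
      simp only [map_add, map_sub, inner_add_left, inner_add_right, inner_sub_left,
        inner_sub_right, Complex.add_re, Complex.sub_re]
      linarith [hsym y x]
    have p := parallelogram_law_with_norm ℂ x y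
    have h1 := (abs_le.mp (h (x + y))).2
    have h2 := (abs_le.mp (h (x - y))).1
    nlinarith [sq_nonneg (‖x‖ - ‖y‖)]
  have hk := key ((((‖x‖ / ‖T x‖ : ℝ) : ℂ)) • T x)
  have hrc : (⟪T x, (((‖x‖ / ‖T x‖ : ℝ) : ℂ)) • T x⟫ : ℂ).re = ‖x‖ * ‖T x‖ := by
    have hTx : (0:ℝ) < ‖T x‖ := norm_pos_iff.mpr h0
    rw [inner_smul_right, inner_self_eq_norm_sq_to_K]
    norm_cast
    simp [← Complex.ofReal_pow]
    field_simp
  have hnc : ‖(((‖x‖ / ‖T x‖ : ℝ) : ℂ)) • T x‖ = ‖x‖ := by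
    have hTx : (0:ℝ) < ‖T x‖ := norm_pos_iff.mpr h0
    rw [norm_smul]
    simp [_root_.abs_of_nonneg (div_nonneg (norm_nonneg x) (norm_nonneg _))]
    field_simp
  rw [hrc, hnc] at hk
  have hxpos : (0:ℝ) < ‖x‖ := norm_pos_iff.mpr hx0
  nlinarith

lemma nrad_nonneg (A : H →L[ℂ] H) : 0 ≤ nrad A :=
  Real.iSup_nonneg fun _ => norm_nonneg _

lemma nrad_bdd (A : H →L[ℂ] H) :
    BddAbove (Set.range fun x : {x : H // ‖x‖ = 1} => ‖(⟪A x, (x:H)⟫ : ℂ)‖) := by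
  refine ⟨‖A‖, ?_⟩
  rintro _ ⟨x, rfl⟩
  calc ‖(⟪A x, (x:H)⟫ : ℂ)‖ ≤ ‖A (x:H)‖ * ‖(x:H)‖ := norm_inner_le_norm _ _
    _ ≤ ‖A‖ * ‖(x:H)‖ * ‖(x:H)‖ := by
        gcongr; exact le_opNorm A x
    _ = ‖A‖ := by rw [x.2]; ring

lemma inner_le_nrad (A : H →L[ℂ] H) (x : H) :
    ‖(⟪A x, x⟫ : ℂ)‖ ≤ nrad A * ‖x‖ ^ 2 := by
  rcases eq_or_ne x 0 with rfl | hx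
  · simp
  have hxp : (0:ℝ) < ‖x‖ := norm_pos_iff.mpr hx
  set u : H := (((‖x‖⁻¹ : ℝ)) : ℂ) • x with hu
  have hun : ‖u‖ = 1 := by
    rw [hu, norm_smul]
    simp [_root_.abs_of_nonneg (inv_nonneg.mpr (norm_nonneg x)), hxp.ne']
  have h1 : ‖(⟪A u, u⟫ : ℂ)‖ ≤ nrad A :=
    le_ciSup (nrad_bdd A) (⟨u, hun⟩ : {x : H // ‖x‖ = 1})
  have h2 : (⟪A u, u⟫ : ℂ) = (((‖x‖⁻¹ ^ 2 : ℝ)) : ℂ) * ⟪A x, x⟫ := by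
    rw [hu]
    simp only [map_smul, inner_smul_left, inner_smul_right]
    rw [Complex.conj_ofReal]
    push_cast
    ring
  rw [h2] at h1
  rw [norm_mul] at h1
  simp only [Complex.norm_real, Real.norm_eq_abs] at h1
  rw [_root_.abs_of_nonneg (by positivity)] at h1
  have : ‖(⟪A x, x⟫ : ℂ)‖ = ‖x‖ ^ 2 * (‖x‖⁻¹ ^ 2 * ‖(⟪A x, x⟫ : ℂ)‖) := by
    field_simp
  rw [this]
  calc ‖x‖ ^ 2 * (‖x‖⁻¹ ^ 2 * ‖(⟪A x, x⟫ : ℂ)‖) ≤ ‖x‖ ^ 2 * nrad A := by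
        gcongr
    _ = nrad A * ‖x‖ ^ 2 := by ring

lemma reP_sa (A : H →L[ℂ] H) : IsSelfAdjoint (reP A) := by
  rw [IsSelfAdjoint, reP, star_smul, star_add, star_eq_adjoint, star_eq_adjoint,
    adjoint_adjoint]
  rw [show star (2:ℂ)⁻¹ = (2:ℂ)⁻¹ by simp]
  rw [add_comm]

lemma imP_sa (A : H →L[ℂ] H) : IsSelfAdjoint (imP A) := by
  rw [IsSelfAdjoint, imP, star_smul, star_sub, star_eq_adjoint, star_eq_adjoint,
    adjoint_adjoint]
  rw [show star (2 * Complex.I)⁻¹ = -(2 * Complex.I)⁻¹ by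
    simp [Complex.ext_iff]]
  module

lemma adj_inner (A : H →L[ℂ] H) (x : H) :
    (⟪(adjoint A) x, x⟫ : ℂ) = (starRingEnd ℂ) (⟪A x, x⟫ : ℂ) := by
  rw [adjoint_inner_left, ← inner_conj_symm]

lemma quad_reP (A : H →L[ℂ] H) (x : H) :
    (⟪reP A x, x⟫ : ℂ) = (((⟪A x, x⟫ : ℂ).re : ℝ) : ℂ) := by
  simp only [reP, smul_apply, add_apply, inner_smul_left, inner_add_left, adj_inner]
  set z : ℂ := ⟪A x, x⟫
  simp [Complex.ext_iff]
  ring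

lemma quad_imP (A : H →L[ℂ] H) (x : H) :
    (⟪imP A x, x⟫ : ℂ) = ((-(⟪A x, x⟫ : ℂ).im : ℝ) : ℂ) := by
  simp only [imP, smul_apply, sub_apply, inner_smul_left, inner_sub_left, adj_inner]
  set z : ℂ := ⟪A x, x⟫
  simp [Complex.ext_iff, Complex.div_re, Complex.div_im, Complex.normSq_apply]
  ring

lemma quad_plus (A : H →L[ℂ] H) (x : H) :
    (⟪(reP A + imP A) x, x⟫ : ℂ).re = (⟪A x, x⟫ : ℂ).re - (⟪A x, x⟫ : ℂ).im := by
  rw [add_apply, inner_add_left, quad_reP, quad_imP]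
  simp
  ring

lemma quad_minus (A : H →L[ℂ] H) (x : H) :
    (⟪(reP A - imP A) x, x⟫ : ℂ).re = (⟪A x, x⟫ : ℂ).re + (⟪A x, x⟫ : ℂ).im := by
  rw [sub_apply, inner_sub_left, quad_reP, quad_imP]
  simp

lemma decomp (A : H →L[ℂ] H) :
    A = ((1 + Complex.I)/2) • (reP A + imP A) + ((1 - Complex.I)/2) • (reP A - imP A) := by
  rw [reP, imP]
  match_scalars <;> field_simp <;> ring

lemma abs_re_sub_im_le (z : ℂ) : |z.re - z.im| ≤ Real.sqrt 2 * ‖z‖ := by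
  have hz : ‖z‖ ^ 2 = z.re ^ 2 + z.im ^ 2 := by
    rw [Complex.sq_norm, Complex.normSq_apply]; ring
  refine le_of_pow_le_pow_left₀ two_ne_zero (by positivity) ?_
  rw [_root_.sq_abs, mul_pow, Real.sq_sqrt (by norm_num : (0:ℝ) ≤ 2)]
  nlinarith [sq_nonneg (z.re + z.im)]

lemma abs_re_add_im_le (z : ℂ) : |z.re + z.im| ≤ Real.sqrt 2 * ‖z‖ := by
  have hz : ‖z‖ ^ 2 = z.re ^ 2 + z.im ^ 2 := by
    rw [Complex.sq_norm, Complex.normSq_apply]; ring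
  refine le_of_pow_le_pow_left₀ two_ne_zero (by positivity) ?_
  rw [_root_.sq_abs, mul_pow, Real.sq_sqrt (by norm_num : (0:ℝ) ≤ 2)]
  nlinarith [sq_nonneg (z.re - z.im)]

lemma norm_c1 : ‖((1 + Complex.I)/2 : ℂ)‖ = Real.sqrt 2 / 2 := by
  rw [norm_div, Complex.norm_def, Complex.normSq_apply]
  simp
  norm_num

lemma norm_c2 : ‖((1 - Complex.I)/2 : ℂ)‖ = Real.sqrt 2 / 2 := by
  rw [norm_div, Complex.norm_def, Complex.normSq_apply]
  simp
  norm_num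

theorem stmt0 (A : H →L[ℂ] H) :
    nrad A ≥ (1/2) * ‖A‖ + (1/(2 * Real.sqrt 2)) * |‖reP A + imP A‖ - ‖reP A - imP A‖| := by
  set s : ℝ := Real.sqrt 2 with hs
  have hs0 : (0:ℝ) < s := Real.sqrt_pos.mpr (by norm_num)
  have hs2 : s ^ 2 = 2 := Real.sq_sqrt (by norm_num)
  set w : ℝ := nrad A with hw
  have hw0 : 0 ≤ w := nrad_nonneg A
  set a : ℝ := ‖reP A + imP A‖ with hadef
  set b : ℝ := ‖reP A - imP A‖ with hbdef
  have ha : a ≤ s * w := by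
    refine sa_norm_le _ ((reP_sa A).add (imP_sa A)) _ (by positivity) fun x => ?_
    rw [quad_plus]
    calc |(inner ℂ (A x) x : ℂ).re - (inner ℂ (A x) x : ℂ).im|
        ≤ s * ‖(inner ℂ (A x) x : ℂ)‖ := abs_re_sub_im_le _
      _ ≤ s * (w * ‖x‖ ^ 2) := by
          have := inner_le_nrad A x
          gcongr
      _ = s * w * ‖x‖ ^ 2 := by ring
  have hb : b ≤ s * w := by
    refine sa_norm_le _ ((reP_sa A).sub (imP_sa A)) _ (by positivity) fun x => ?_
    rw [quad_minus]
    calc |(inner ℂ (A x) x : ℂ).re + (inner ℂ (A x) x : ℂ).im|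
        ≤ s * ‖(inner ℂ (A x) x : ℂ)‖ := abs_re_add_im_le _
      _ ≤ s * (w * ‖x‖ ^ 2) := by
          have := inner_le_nrad A x
          gcongr
      _ = s * w * ‖x‖ ^ 2 := by ring
  have hA : ‖A‖ ≤ s / 2 * (a + b) := by
    calc ‖A‖ = ‖((1 + Complex.I)/2) • (reP A + imP A)
        + ((1 - Complex.I)/2) • (reP A - imP A)‖ := by rw [← decomp A]
      _ ≤ ‖((1 + Complex.I)/2) • (reP A + imP A)‖
          + ‖((1 - Complex.I)/2) • (reP A - imP A)‖ := norm_add_le _ _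
      _ = s / 2 * a + s / 2 * b := by
          rw [norm_smul, norm_smul, norm_c1, norm_c2]
      _ = s / 2 * (a + b) := by ring
  have hinv : 1 / (2 * s) = s / 4 := by
    rw [div_eq_div_iff (by positivity) (by norm_num)]
    nlinarith
  rw [hinv]
  have hss : s * (s * w) = 2 * w := by
    rw [← mul_assoc, ← sq, hs2]
  rcases abs_cases (a - b) with ⟨he, _⟩ | ⟨he, _⟩ <;> rw [he]
  · have h1 : s * a ≤ s * (s * w) := by gcongr
    rw [hss] at h1
    nlinarith
  · have h1 : s * b ≤ s * (s * w) := by gcongr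
    rw [hss] at h1
    nlinarith
end

section
/- Heinz inequality: let A be a bounded linear operator on a complex Hilbert space H, let x, y ∈ H, and let α ∈ [0,1]. Then |⟨Ax, y⟩|² ≤ ⟨|A|^{2α} x, x⟩ · ⟨|A*|^{2(1−α)} y, y⟩, where |A| = (A*A)^{1/2}. -/
set_option maxHeartbeats 2000000

open ContinuousLinearMap Complex

variable {H : Type*} [NormedAddCommGroup H] [InnerProductSpace ℂ H] [CompleteSpace H]

lemma heinz_rpow_add_le {t e p : ℝ} (ht : 0 ≤ t) (he : 0 ≤ e) (hp : 0 ≤ p) (hp1 : p ≤ 1) :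
    (t + e) ^ p ≤ t ^ p + e ^ p := by
  lift t to NNReal using ht
  lift e to NNReal using he
  exact_mod_cast NNReal.rpow_add_le_add_rpow t e hp hp1

lemma heinz_inner_re_mono {S T : H →L[ℂ] H} (h : S ≤ T) (x : H) :
    (inner ℂ (S x) x : ℂ).re ≤ (inner ℂ (T x) x : ℂ).re := by
  have h2 := ((T - S).nonneg_iff_isPositive.mp (sub_nonneg.mpr h)).inner_nonneg_left x
  simp only [ContinuousLinearMap.sub_apply, inner_sub_left, map_sub, RCLike.re_to_complex] at h2
  have h3 := (Complex.le_def.mp h2).1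
  simp only [Complex.zero_re, Complex.sub_re] at h3
  linarith

lemma heinz_inner_re_nonneg {T : H →L[ℂ] H} (h : 0 ≤ T) (x : H) :
    0 ≤ (inner ℂ (T x) x : ℂ).re := by
  simpa using heinz_inner_re_mono h x

lemma heinz_pow_swap (A : H →L[ℂ] H) (n : ℕ) :
    (A * adjoint A) ^ n * A = A * (adjoint A * A) ^ n := by
  induction n with
  | zero => simp
  | succ n ih =>
      calc (A * adjoint A) ^ (n + 1) * A = (A * adjoint A) ^ n * (A * (adjoint A * A)) := by
            rw [pow_succ, mul_assoc, mul_assoc]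
        _ = ((A * adjoint A) ^ n * A) * (adjoint A * A) := by rw [mul_assoc]
        _ = A * (adjoint A * A) ^ (n + 1) := by rw [ih, pow_succ, mul_assoc]

lemma heinz_aeval_swap (A : H →L[ℂ] H) (p : Polynomial ℝ) :
    Polynomial.aeval (A * adjoint A) p * A = A * Polynomial.aeval (adjoint A * A) p := by
  induction p using Polynomial.induction_on' with
  | add p q hp hq => simp only [map_add, add_mul, mul_add, hp, hq]
  | monomial n c =>
      simp only [Polynomial.aeval_monomial]
      rw [mul_assoc, heinz_pow_swap, ← mul_assoc, Algebra.commutes, mul_assoc]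

lemma heinz_cfc_swap (A : H →L[ℂ] H) (f : ℝ → ℝ) (hf : Continuous f) :
    cfc f (A * adjoint A) * A = A * cfc f (adjoint A * A) := by
  cases subsingleton_or_nontrivial H
  · exact Subsingleton.elim _ _
  have hsa : IsSelfAdjoint (adjoint A * A) := by
    rw [← star_eq_adjoint]; exact IsSelfAdjoint.star_mul_self A
  have hsb : IsSelfAdjoint (A * adjoint A) := by
    rw [← star_eq_adjoint]; exact IsSelfAdjoint.mul_star_self A
  set a := adjoint A * A
  set b := A * adjoint A
  set M := max ‖a‖ ‖b‖ with hM
  have hspa : spectrum ℝ a ⊆ Set.Icc (-M) M := by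
    intro t ht
    have := spectrum.norm_le_norm_of_mem ht
    rw [Real.norm_eq_abs, abs_le] at this
    constructor
    · linarith [this.1, le_max_left ‖a‖ ‖b‖]
    · linarith [this.2, le_max_left ‖a‖ ‖b‖]
  have hspb : spectrum ℝ b ⊆ Set.Icc (-M) M := by
    intro t ht
    have := spectrum.norm_le_norm_of_mem ht
    rw [Real.norm_eq_abs, abs_le] at this
    constructor
    · linarith [this.1, le_max_right ‖a‖ ‖b‖]
    · linarith [this.2, le_max_right ‖a‖ ‖b‖]
  have key : ∀ ε : ℝ, 0 < ε → ‖cfc f b * A - A * cfc f a‖ ≤ ε := by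
    intro ε hε
    set δ := ε / (2 * ‖A‖ + 1) with hδdef
    have hδ : 0 < δ := by positivity
    obtain ⟨p, hp⟩ := exists_polynomial_near_of_continuousOn (-M) M f hf.continuousOn δ hδ
    have hb1 : ‖cfc f b - cfc p.eval b‖ ≤ δ := by
      rw [← cfc_sub f p.eval b hf.continuousOn p.continuous.continuousOn]
      refine norm_cfc_le hδ.le fun t ht => ?_
      rw [Real.norm_eq_abs, abs_sub_comm]
      exact (hp t (hspb ht)).le
    have ha1 : ‖cfc p.eval a - cfc f a‖ ≤ δ := by
      rw [← cfc_sub p.eval f a p.continuous.continuousOn hf.continuousOn]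
      refine norm_cfc_le hδ.le fun t ht => ?_
      rw [Real.norm_eq_abs]
      exact (hp t (hspa ht)).le
    have hmid : cfc p.eval b * A = A * cfc p.eval a := by
      rw [cfc_polynomial p b hsb, cfc_polynomial p a hsa]
      exact heinz_aeval_swap A p
    have hsplit : cfc f b * A - A * cfc f a
        = (cfc f b - cfc p.eval b) * A + A * (cfc p.eval a - cfc f a) := by
      rw [sub_mul, mul_sub, hmid]; abel
    calc ‖cfc f b * A - A * cfc f a‖
        ≤ ‖(cfc f b - cfc p.eval b) * A‖ + ‖A * (cfc p.eval a - cfc f a)‖ := by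
          rw [hsplit]; exact norm_add_le _ _
      _ ≤ ‖cfc f b - cfc p.eval b‖ * ‖A‖ + ‖A‖ * ‖cfc p.eval a - cfc f a‖ := by
          gcongr <;> exact norm_mul_le _ _
      _ ≤ δ * ‖A‖ + ‖A‖ * δ := by gcongr
      _ ≤ ε := by
          have h1 : (0:ℝ) < 2 * ‖A‖ + 1 := by positivity
          have h2 : δ * (2 * ‖A‖ + 1) = ε := div_mul_cancel₀ ε h1.ne'
          nlinarith [norm_nonneg A, hδ.le]
  have h0 : ‖cfc f b * A - A * cfc f a‖ ≤ 0 := by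
    refine le_of_forall_pos_le_add fun ε hε => ?_
    simpa using key ε hε
  exact sub_eq_zero.mp (norm_le_zero_iff.mp h0)

theorem stmt7 (A : H →L[ℂ] H) (x y : H) (α : ℝ) (hα : α ∈ Set.Icc (0:ℝ) 1) :
    ‖(inner ℂ (A x) y : ℂ)‖ ^ 2
      ≤ (inner ℂ (opow (oabs A) (2 * α) x) x : ℂ).re
        * (inner ℂ (opow (oabs (adjoint A)) (2 * (1 - α)) y) y : ℂ).re := by
  obtain ⟨hα0, hα1⟩ := hα
  have hp0 : (0:ℝ) ≤ 1 - α := by linarith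
  have hsa : IsSelfAdjoint (adjoint A * A) := by
    rw [← star_eq_adjoint]; exact IsSelfAdjoint.star_mul_self A
  have hsb : IsSelfAdjoint (A * adjoint A) := by
    rw [← star_eq_adjoint]; exact IsSelfAdjoint.mul_star_self A
  have ha0 : (0 : H →L[ℂ] H) ≤ adjoint A * A := by
    rw [← star_eq_adjoint]; exact star_mul_self_nonneg A
  have hb0 : (0 : H →L[ℂ] H) ≤ A * adjoint A := by
    rw [← star_eq_adjoint]; exact mul_star_self_nonneg A
  have hspa : ∀ t ∈ spectrum ℝ (adjoint A * A), 0 ≤ t :=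
    fun t ht => spectrum_nonneg_of_nonneg ha0 ht
  have hspb : ∀ t ∈ spectrum ℝ (A * adjoint A), 0 ≤ t :=
    fun t ht => spectrum_nonneg_of_nonneg hb0 ht
  -- Step A : rewrite the two `opow ∘ oabs` into cfc of rpow on A†A and AA†
  have hA : opow (oabs A) (2 * α) = cfc (fun t : ℝ => t ^ α) (adjoint A * A) := by
    show cfc (fun t : ℝ => t ^ (2 * α)) (cfc Real.sqrt (adjoint A * A)) = _
    rw [← cfc_comp (fun t : ℝ => t ^ (2 * α)) Real.sqrt (adjoint A * A) hsa
        (Real.continuous_rpow_const (by positivity)).continuousOn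
        Real.continuous_sqrt.continuousOn]
    refine cfc_congr fun t ht => ?_
    have h0 : (0:ℝ) ≤ t := hspa t ht
    simp only [Function.comp_apply]
    rw [Real.sqrt_eq_rpow, ← Real.rpow_mul h0]
    congr 1; ring
  have hB : opow (oabs (adjoint A)) (2 * (1 - α)) = cfc (fun t : ℝ => t ^ (1-α)) (A * adjoint A) := by
    have hoabs : oabs (adjoint A) = cfc Real.sqrt (A * adjoint A) := by
      unfold oabs; rw [adjoint_adjoint]
    show cfc (fun t : ℝ => t ^ (2 * (1 - α))) (oabs (adjoint A)) = _
    rw [hoabs,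
      ← cfc_comp (fun t : ℝ => t ^ (2 * (1 - α))) Real.sqrt (A * adjoint A) hsb
        (Real.continuous_rpow_const (by positivity)).continuousOn
        Real.continuous_sqrt.continuousOn]
    refine cfc_congr fun t ht => ?_
    have h0 : (0:ℝ) ≤ t := hspb t ht
    simp only [Function.comp_apply]
    rw [Real.sqrt_eq_rpow, ← Real.rpow_mul h0]
    congr 1; ring
  rw [hA, hB]
  set K1 := (inner ℂ (cfc (fun t : ℝ => t ^ α) (adjoint A * A) x) x : ℂ).re with hK1def
  set K2 := (inner ℂ (cfc (fun t : ℝ => t ^ (1-α)) (A * adjoint A) y) y : ℂ).re with hK2def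
  have hK1 : 0 ≤ K1 :=
    heinz_inner_re_nonneg (cfc_nonneg fun t ht => Real.rpow_nonneg (hspa t ht) α) x
  -- the ε-regularized main bound
  have main : ∀ ε : ℝ, 0 < ε →
      ‖(inner ℂ (A x) y : ℂ)‖ ^ 2 ≤ K1 *
        (inner ℂ (cfc (fun t : ℝ => (max t 0 + ε) ^ (1 - α)) (A * adjoint A) y) y : ℂ).re := by
    intro ε hε
    set β := (1 - α) / 2 with hβdef
    have hβ : 0 ≤ β := by rw [hβdef]; linarith
    have hbase : ∀ t : ℝ, 0 < max t 0 + ε :=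
      fun t => add_pos_of_nonneg_of_pos (le_max_right t 0) hε
    have hcbase : Continuous (fun t : ℝ => max t 0 + ε) :=
      (continuous_id.max continuous_const).add continuous_const
    have hgc : Continuous (fun t : ℝ => (max t 0 + ε) ^ (-β)) :=
      hcbase.rpow_const fun t => Or.inl (hbase t).ne'
    have hhc : Continuous (fun t : ℝ => (max t 0 + ε) ^ β) :=
      hcbase.rpow_const fun t => Or.inl (hbase t).ne'
    set g : ℝ → ℝ := fun t => (max t 0 + ε) ^ (-β) with hgdef
    set h : ℝ → ℝ := fun t => (max t 0 + ε) ^ β with hhdef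
    have hhg : (fun t : ℝ => h t * g t) = fun _ : ℝ => (1:ℝ) := by
      funext t
      show (max t 0 + ε) ^ β * (max t 0 + ε) ^ (-β) = 1
      rw [← Real.rpow_add (hbase t)]
      simp
    have factor : cfc h (A * adjoint A) * (A * cfc g (adjoint A * A)) = A := by
      rw [← mul_assoc, heinz_cfc_swap A h hhc, mul_assoc,
        ← cfc_mul h g (adjoint A * A) hhc.continuousOn hgc.continuousOn, hhg,
        cfc_const (1:ℝ) (adjoint A * A) hsa, map_one, mul_one]
    have hTsa : IsSelfAdjoint (cfc h (A * adjoint A)) := cfc_predicate h (A * adjoint A)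
    have hgsa : IsSelfAdjoint (cfc g (adjoint A * A)) := cfc_predicate g (adjoint A * A)
    have hinner : (inner ℂ (A x) y : ℂ)
        = inner ℂ ((A * cfc g (adjoint A * A)) x) (cfc h (A * adjoint A) y) := by
      conv_lhs => rw [← factor]
      rw [ContinuousLinearMap.mul_apply]
      conv_lhs => rw [← isSelfAdjoint_iff'.mp hTsa]
      exact ContinuousLinearMap.adjoint_inner_left _ _ _
    have hCS : ‖(inner ℂ (A x) y : ℂ)‖
        ≤ ‖(A * cfc g (adjoint A * A)) x‖ * ‖cfc h (A * adjoint A) y‖ := by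
      rw [hinner]; exact norm_inner_le_norm _ _
    -- bound the first factor
    have hu : ‖(A * cfc g (adjoint A * A)) x‖ ^ 2 ≤ K1 := by
      set u := cfc g (adjoint A * A) x with hu_def
      have e1 : ‖(A * cfc g (adjoint A * A)) x‖ ^ 2
          = (inner ℂ ((adjoint A * A) u) u : ℂ).re := by
        rw [ContinuousLinearMap.mul_apply, ContinuousLinearMap.mul_apply,
          ContinuousLinearMap.adjoint_inner_left, inner_self_eq_norm_sq_to_K]
        simp [← Complex.ofReal_pow, hu_def]
      have op1 : cfc g (adjoint A * A) * ((adjoint A * A) * cfc g (adjoint A * A))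
          = cfc (fun t : ℝ => g t * (t * g t)) (adjoint A * A) := by
        rw [cfc_mul g (fun t : ℝ => t * g t) (adjoint A * A) hgc.continuousOn
            (continuous_id.mul hgc).continuousOn,
          cfc_mul (fun t : ℝ => t) g (adjoint A * A) continuous_id.continuousOn
            hgc.continuousOn, cfc_id' ℝ (adjoint A * A) hsa]
      have e2 : (inner ℂ ((adjoint A * A) u) u : ℂ)
          = inner ℂ (cfc (fun t : ℝ => g t * (t * g t)) (adjoint A * A) x) x := by
        have h3 := ContinuousLinearMap.adjoint_inner_right
          (cfc g (adjoint A * A)) ((adjoint A * A) u) x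
        rw [isSelfAdjoint_iff'.mp hgsa] at h3
        rw [hu_def] at h3 ⊢
        rw [h3, ← op1]
        simp only [ContinuousLinearMap.mul_apply]
      have hkle : ∀ t ∈ spectrum ℝ (adjoint A * A), g t * (t * g t) ≤ t ^ α := by
        intro t ht
        have h0 : (0:ℝ) ≤ t := hspa t ht
        have hmax : max t 0 = t := max_eq_left h0
        show (max t 0 + ε) ^ (-β) * (t * (max t 0 + ε) ^ (-β)) ≤ t ^ α
        rw [hmax]
        rcases h0.eq_or_lt with h0' | hpos
        · rw [← h0']
          simp only [mul_zero, zero_mul]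
          exact Real.rpow_nonneg le_rfl α
        · have e3 : (t + ε) ^ (-β) * (t * (t + ε) ^ (-β))
              = t * ((t + ε) ^ (-β) * (t + ε) ^ (-β)) := by ring
          rw [e3, ← Real.rpow_add (by linarith : (0:ℝ) < t + ε)]
          have e4 : -β + -β = -(1 - α) := by rw [hβdef]; ring
          rw [e4]
          have h5 : (t + ε) ^ (-(1 - α)) ≤ t ^ (-(1 - α)) :=
            Real.rpow_le_rpow_of_nonpos hpos (by linarith) (by linarith)
          calc t * (t + ε) ^ (-(1 - α)) ≤ t * t ^ (-(1 - α)) :=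
                mul_le_mul_of_nonneg_left h5 h0
            _ = t ^ α := by
                nth_rw 1 [← Real.rpow_one t]
                rw [← Real.rpow_add hpos]
                congr 1; ring
      have hle : cfc (fun t : ℝ => g t * (t * g t)) (adjoint A * A)
          ≤ cfc (fun t : ℝ => t ^ α) (adjoint A * A) :=
        cfc_mono hkle (hgc.mul (continuous_id.mul hgc)).continuousOn
          (Real.continuous_rpow_const hα0).continuousOn
      rw [e1, e2]
      exact heinz_inner_re_mono hle x
    -- the second factor, exactly
    have hv : ‖cfc h (A * adjoint A) y‖ ^ 2
        = (inner ℂ (cfc (fun t : ℝ => (max t 0 + ε) ^ (1 - α)) (A * adjoint A) y) y : ℂ).re := by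
      have op2 : cfc h (A * adjoint A) * cfc h (A * adjoint A)
          = cfc (fun t : ℝ => (max t 0 + ε) ^ (1 - α)) (A * adjoint A) := by
        rw [← cfc_mul h h (A * adjoint A) hhc.continuousOn hhc.continuousOn]
        refine cfc_congr fun t ht => ?_
        show (max t 0 + ε) ^ β * (max t 0 + ε) ^ β = _
        rw [← Real.rpow_add (hbase t)]
        congr 1
        rw [hβdef]; ring
      have h3 := ContinuousLinearMap.adjoint_inner_right
        (cfc h (A * adjoint A)) (cfc h (A * adjoint A) y) y
      rw [isSelfAdjoint_iff'.mp hTsa] at h3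
      rw [← op2, ContinuousLinearMap.mul_apply, ← h3, inner_self_eq_norm_sq_to_K]
      simp [← Complex.ofReal_pow]
    calc ‖(inner ℂ (A x) y : ℂ)‖ ^ 2
        ≤ (‖(A * cfc g (adjoint A * A)) x‖ * ‖cfc h (A * adjoint A) y‖) ^ 2 := by
          exact pow_le_pow_left₀ (norm_nonneg _) hCS 2
      _ = ‖(A * cfc g (adjoint A * A)) x‖ ^ 2 * ‖cfc h (A * adjoint A) y‖ ^ 2 := mul_pow _ _ _
      _ ≤ K1 * (inner ℂ (cfc (fun t : ℝ => (max t 0 + ε) ^ (1 - α)) (A * adjoint A) y) y : ℂ).re := by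
          rw [← hv]
          exact mul_le_mul_of_nonneg_right hu (sq_nonneg _)
  -- pass to the limit ε → 0
  by_cases hone : α = 1
  · subst hone
    have h1 := main 1 one_pos
    have heq : (fun t : ℝ => (max t 0 + 1) ^ (1 - (1:ℝ))) = fun t : ℝ => t ^ (1 - (1:ℝ)) := by
      funext t; norm_num
    rw [heq] at h1
    exact h1
  · have hlt : α < 1 := lt_of_le_of_ne hα1 hone
    have hp : (0:ℝ) < 1 - α := by linarith
    refine le_of_forall_pos_le_add fun δ hδ => ?_
    set C := K1 * ‖y‖ ^ 2 with hCdef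
    have hC0 : 0 ≤ C := mul_nonneg hK1 (sq_nonneg _)
    have hd0 : 0 < δ / (C + 1) := by positivity
    set ε := (δ / (C + 1)) ^ (1 - α)⁻¹ with hεdef
    have hε0 : 0 < ε := Real.rpow_pos_of_pos hd0 _
    have hεp : ε ^ (1 - α) = δ / (C + 1) := by
      rw [hεdef, ← Real.rpow_mul hd0.le, inv_mul_cancel₀ hp.ne', Real.rpow_one]
    have hEb : (inner ℂ (cfc (fun t : ℝ => (max t 0 + ε) ^ (1 - α)) (A * adjoint A) y) y : ℂ).re
        ≤ K2 + ε ^ (1 - α) * ‖y‖ ^ 2 := by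
      have hbase : Continuous (fun t : ℝ => max t 0 + ε) :=
        (continuous_id.max continuous_const).add continuous_const
      have hmono : cfc (fun t : ℝ => (max t 0 + ε) ^ (1 - α)) (A * adjoint A)
          ≤ cfc (fun t : ℝ => t ^ (1 - α) + ε ^ (1 - α)) (A * adjoint A) := by
        refine cfc_mono (fun t ht => ?_)
          (hbase.rpow_const fun t =>
            Or.inl (add_pos_of_nonneg_of_pos (le_max_right t 0) hε0).ne').continuousOn
          ((Real.continuous_rpow_const hp0).add continuous_const).continuousOn
        have h0 := hspb t ht
        rw [max_eq_left h0]
        exact heinz_rpow_add_le h0 hε0.le hp0 (by linarith)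
      have h4 := heinz_inner_re_mono hmono y
      have hsplit : cfc (fun t : ℝ => t ^ (1 - α) + ε ^ (1 - α)) (A * adjoint A)
          = cfc (fun t : ℝ => t ^ (1 - α)) (A * adjoint A)
            + algebraMap ℝ (H →L[ℂ] H) (ε ^ (1 - α)) := by
        rw [cfc_add (A * adjoint A) _ _ (Real.continuous_rpow_const hp0).continuousOn
          continuous_const.continuousOn, cfc_const _ _ hsb]
      rw [hsplit] at h4
      refine h4.trans (le_of_eq ?_)
      rw [ContinuousLinearMap.add_apply, inner_add_left, Complex.add_re, hK2def]
      congr 1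
      rw [Algebra.algebraMap_eq_smul_one]
      rw [ContinuousLinearMap.smul_apply, ContinuousLinearMap.one_apply]
      rw [RCLike.real_smul_eq_coe_smul (K := ℂ), inner_smul_real_left,
        inner_self_eq_norm_sq_to_K]
      simp [← Complex.ofReal_pow]
    calc ‖(inner ℂ (A x) y : ℂ)‖ ^ 2
        ≤ K1 * (inner ℂ (cfc (fun t : ℝ => (max t 0 + ε) ^ (1 - α)) (A * adjoint A) y) y : ℂ).re :=
          main ε hε0
      _ ≤ K1 * (K2 + ε ^ (1 - α) * ‖y‖ ^ 2) := mul_le_mul_of_nonneg_left hEb hK1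
      _ = K1 * K2 + ε ^ (1 - α) * C := by rw [hCdef]; ring
      _ ≤ K1 * K2 + δ := by
          have h5 : ε ^ (1 - α) * C ≤ δ := by
            rw [hεp, div_mul_eq_mul_div, div_le_iff₀ (by positivity)]
            nlinarith
          linarith
end

section
/- Let A be a bounded linear operator on a complex Hilbert space H and let α ∈ [0,1]. Then w(A)² ≤ (1/4)‖ |A|^{4α} + |A*|^{4(1−α)} ‖ + (1/2) w( |A*|^{2(1−α)} |A|^{2α} ). -/
set_option maxHeartbeats 1000000

open ContinuousLinearMap Complex

variable {H : Type*} [NormedAddCommGroup H] [InnerProductSpace ℂ H] [CompleteSpace H]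

/-! ### Auxiliary lemmas -/

section Auxiliary

/-- Buzano's inequality. -/
lemma stmt8_buzano (x u v : H) (hx : ‖x‖ = 1) :
    ‖(inner ℂ u x : ℂ) * (inner ℂ x v : ℂ)‖ ≤ (‖u‖ * ‖v‖ + ‖(inner ℂ u v : ℂ)‖) / 2 := by
  set c : ℂ := inner ℂ x v with hc
  have hrefl : ‖((2 : ℂ) * c) • x - v‖ = ‖v‖ := by
    have hsq : ‖((2 : ℂ) * c) • x - v‖ ^ 2 = ‖v‖ ^ 2 := by
      rw [@norm_sub_sq ℂ, inner_smul_left, ← hc, norm_smul, hx]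
      simp only [RCLike.re_to_complex, mul_one,
        Complex.normSq_apply, Complex.mul_re, Complex.mul_im, map_mul, Complex.conj_re,
        Complex.conj_im, Complex.ofReal_re, Complex.ofReal_im]
      norm_num
      rw [mul_pow, Complex.sq_norm, Complex.normSq_apply]
      ring
    rw [← Real.sqrt_sq (norm_nonneg _), ← Real.sqrt_sq (norm_nonneg v), hsq]
  have hexp : (inner ℂ u (((2 : ℂ) * c) • x - v) : ℂ) = 2 * c * inner ℂ u x - inner ℂ u v := by
    rw [inner_sub_right, inner_smul_right]
  have hcs : ‖(2 : ℂ) * c * inner ℂ u x - (inner ℂ u v : ℂ)‖ ≤ ‖u‖ * ‖v‖ := by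
    rw [← hexp]
    calc ‖(inner ℂ u (((2 : ℂ) * c) • x - v) : ℂ)‖ ≤ ‖u‖ * ‖((2 : ℂ) * c) • x - v‖ :=
          norm_inner_le_norm _ _
      _ = ‖u‖ * ‖v‖ := by rw [hrefl]
  have htri : ‖(2 : ℂ) * c * inner ℂ u x‖ - ‖(inner ℂ u v : ℂ)‖ ≤ ‖(2:ℂ) * c * inner ℂ u x - inner ℂ u v‖ :=
    norm_sub_norm_le _ _
  have hnm : ‖(2:ℂ) * c * inner ℂ u x‖ = 2 * ‖(inner ℂ u x : ℂ) * c‖ := by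
    rw [show (2:ℂ) * c * inner ℂ u x = 2 * ((inner ℂ u x : ℂ) * c) by ring, norm_mul]
    simp
  linarith

lemma stmt8_aeval_comm (A : H →L[ℂ] H) (p : Polynomial ℝ) :
    A * Polynomial.aeval (adjoint A * A) p = Polynomial.aeval (A * adjoint A) p * A := by
  induction p using Polynomial.induction_on' with
  | add p q hp hq => simp [map_add, mul_add, add_mul, hp, hq]
  | monomial n c =>
      simp only [Polynomial.aeval_monomial, Algebra.algebraMap_eq_smul_one, smul_mul_assoc,
        one_mul, mul_smul_comm]
      congr 1
      induction n with
      | zero => simp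
      | succ n ih => rw [pow_succ, pow_succ, ← mul_assoc, ← mul_assoc, ih]; noncomm_ring

/-- Intertwining of the continuous functional calculi of `A*A` and `AA*`. -/
lemma stmt8_cfc_comm (A : H →L[ℂ] H) (f : ℝ → ℝ) (M : ℝ)
    (hf : ContinuousOn f (Set.Icc 0 M))
    (hS : spectrum ℝ (adjoint A * A) ⊆ Set.Icc 0 M)
    (hR : spectrum ℝ (A * adjoint A) ⊆ Set.Icc 0 M) :
    A * cfc f (adjoint A * A) = cfc f (A * adjoint A) * A := by
  set S := adjoint A * A with hSdef
  set R := A * adjoint A with hRdef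
  have hSsa : IsSelfAdjoint S := by
    rw [hSdef, ← star_eq_adjoint]; exact IsSelfAdjoint.star_mul_self A
  have hRsa : IsSelfAdjoint R := by
    rw [hRdef, ← star_eq_adjoint]; exact IsSelfAdjoint.mul_star_self A
  have hfS : ContinuousOn f (spectrum ℝ S) := hf.mono hS
  have hfR : ContinuousOn f (spectrum ℝ R) := hf.mono hR
  rw [← sub_eq_zero, ← norm_le_zero_iff]
  refine le_of_forall_pos_le_add ?_
  intro ε hε
  rw [zero_add]
  obtain ⟨p, hp⟩ := exists_polynomial_near_of_continuousOn 0 M f hf (ε / (2 * ‖A‖ + 1))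
    (by positivity)
  have hnorm : ∀ (T : H →L[ℂ] H), IsSelfAdjoint T → spectrum ℝ T ⊆ Set.Icc 0 M →
      ContinuousOn f (spectrum ℝ T) → ‖cfc f T - cfc p.eval T‖ ≤ ε / (2 * ‖A‖ + 1) := by
    intro T hTsa hTspec hfT
    rw [← cfc_sub f p.eval T hfT (p.continuous_aeval.continuousOn)]
    apply norm_cfc_le (by positivity)
    intro x hx
    rw [Real.norm_eq_abs, abs_sub_comm]
    exact (hp x (hTspec hx)).le
  have key : A * Polynomial.aeval S p = Polynomial.aeval R p * A := stmt8_aeval_comm A p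
  have e1 : A * cfc f S - cfc f R * A
      = A * (cfc f S - cfc p.eval S) + (cfc p.eval R - cfc f R) * A := by
    rw [mul_sub, sub_mul, cfc_polynomial p S hSsa, cfc_polynomial p R hRsa, key]
    abel
  rw [e1]
  calc ‖A * (cfc f S - cfc p.eval S) + (cfc p.eval R - cfc f R) * A‖
      ≤ ‖A * (cfc f S - cfc p.eval S)‖ + ‖(cfc p.eval R - cfc f R) * A‖ := norm_add_le _ _
    _ ≤ ‖A‖ * (ε / (2 * ‖A‖ + 1)) + (ε / (2 * ‖A‖ + 1)) * ‖A‖ := by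
        gcongr
        · exact (norm_mul_le _ _).trans (by gcongr; exact hnorm _ hSsa hS hfS)
        · refine (norm_mul_le _ _).trans ?_
          gcongr
          rw [← norm_sub_rev]
          exact hnorm _ hRsa hR hfR
    _ ≤ ε := by
        have h1 : 0 < 2 * ‖A‖ + 1 := by positivity
        rw [mul_div_assoc', div_mul_eq_mul_div, ← add_div, div_le_iff₀ h1]
        nlinarith [norm_nonneg A, hε.le]

lemma stmt8_norm_sq_eq (T : H →L[ℂ] H) (hT : IsSelfAdjoint T) (u : H) :
    ‖T u‖ ^ 2 = Complex.re (inner ℂ ((T * T) u) u) := by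
  have hadj : adjoint T = T := hT.adjoint_eq
  have h2 := ContinuousLinearMap.adjoint_inner_left T u (T u)
  rw [hadj] at h2
  have h1 : (inner ℂ ((T * T) u) u : ℂ) = inner ℂ (T u) (T u) := by
    rw [ContinuousLinearMap.mul_apply]; exact h2
  rw [h1, ← RCLike.re_to_complex, inner_self_eq_norm_sq]

lemma stmt8_re_inner_le {T T' : H →L[ℂ] H} (h : T ≤ T') (u : H) :
    Complex.re (inner ℂ (T u) u) ≤ Complex.re (inner ℂ (T' u) u) := by
  have h0 : 0 ≤ Complex.re (inner ℂ ((T' - T) u) u : ℂ) :=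
    (Complex.nonneg_iff.mp (((ContinuousLinearMap.nonneg_iff_isPositive _).mp (sub_nonneg.mpr h)).inner_nonneg_left u)).1
  rw [ContinuousLinearMap.sub_apply, inner_sub_left] at h0
  simp only [Complex.sub_re] at h0
  linarith

lemma stmt8_rpow_add_le {a b p : ℝ} (ha : 0 ≤ a) (hb : 0 ≤ b) (hp0 : 0 ≤ p) (hp1 : p ≤ 1) :
    (a + b) ^ p ≤ a ^ p + b ^ p := by
  have := NNReal.rpow_add_le_add_rpow (a.toNNReal) (b.toNNReal) hp0 hp1
  have h1 : ((a.toNNReal + b.toNNReal : NNReal) : ℝ) = a + b := by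
    simp [Real.coe_toNNReal, ha, hb]
  calc (a + b) ^ p = ((a.toNNReal + b.toNNReal : NNReal) : ℝ) ^ p := by rw [h1]
    _ = (((a.toNNReal + b.toNNReal) ^ p : NNReal) : ℝ) := by rw [← NNReal.coe_rpow]
    _ ≤ (((a.toNNReal ^ p + b.toNNReal ^ p) : NNReal) : ℝ) := by exact_mod_cast this
    _ = a ^ p + b ^ p := by
        push_cast
        rw [Real.coe_toNNReal a ha, Real.coe_toNNReal b hb]

end Auxiliary

section Kato

variable (A : H →L[ℂ] H)

/-- The generalized mixed Cauchy–Schwarz (Kato) inequality, specialized to equal unit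
vectors. -/
lemma stmt8_kato {α : ℝ} (h0 : 0 ≤ α) (h1 : α ≤ 1) {M : ℝ}
    (hS : spectrum ℝ (adjoint A * A) ⊆ Set.Icc 0 M)
    (hR : spectrum ℝ (A * adjoint A) ⊆ Set.Icc 0 M)
    (x : H) (hx : ‖x‖ = 1) :
    ‖(inner ℂ (A x) x : ℂ)‖ ^ 2 ≤
      Complex.re (inner ℂ (cfc (fun t : ℝ => t ^ α) (adjoint A * A) x) x) *
      Complex.re (inner ℂ (cfc (fun t : ℝ => t ^ (1 - α)) (A * adjoint A) x) x) := by
  set S := adjoint A * A with hSdef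
  set R := A * adjoint A with hRdef
  have hSsa : IsSelfAdjoint S := by
    rw [hSdef, ← star_eq_adjoint]; exact IsSelfAdjoint.star_mul_self A
  have hRsa : IsSelfAdjoint R := by
    rw [hRdef, ← star_eq_adjoint]; exact IsSelfAdjoint.mul_star_self A
  have hSnn : ∀ t ∈ spectrum ℝ S, 0 ≤ t := fun t ht => (hS ht).1
  have hRnn : ∀ t ∈ spectrum ℝ R, 0 ≤ t := fun t ht => (hR ht).1
  set B := cfc (fun t : ℝ => t ^ α) S with hBdef
  set C := cfc (fun t : ℝ => t ^ (1 - α)) R with hCdef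
  have hCcont : ContinuousOn (fun t : ℝ => t ^ (1 - α)) (spectrum ℝ R) := by
    by_cases hα1 : α = 1
    · simpa [hα1] using continuousOn_const
    · exact continuousOn_id.rpow_const fun t ht => Or.inr (by
        have := lt_of_le_of_ne h1 hα1; linarith)
  have hBcont : ContinuousOn (fun t : ℝ => t ^ α) (spectrum ℝ S) :=
    continuousOn_id.rpow_const fun t ht => Or.inr h0
  -- the case α = 0
  by_cases hα0 : α = 0
  · subst hα0
    have hB1 : B = 1 := by
      rw [hBdef, show (fun t : ℝ => t ^ (0:ℝ)) = (fun _ : ℝ => (1:ℝ)) from funext fun t => by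
        rw [Real.rpow_zero], cfc_const_one ℝ S hSsa]
    have hC1 : C = R := by
      rw [hCdef, show (fun t : ℝ => t ^ (1 - (0:ℝ))) = (fun t : ℝ => t) from funext fun t => by
        norm_num, cfc_id' ℝ R hRsa]
    rw [hB1, hC1]
    have e1 : (inner ℂ ((1 : H →L[ℂ] H) x) x : ℂ) = 1 := by
      simp [ContinuousLinearMap.one_apply, inner_self_eq_norm_sq_to_K, hx]
    rw [e1]
    have e2 : Complex.re (inner ℂ (R x) x : ℂ) = ‖adjoint A x‖ ^ 2 := by
      have h := ContinuousLinearMap.adjoint_inner_left (adjoint A) x (adjoint A x)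
      rw [adjoint_adjoint] at h
      have hRx : (inner ℂ (R x) x : ℂ) = inner ℂ (adjoint A x) (adjoint A x) := by
        rw [ContinuousLinearMap.mul_apply]; exact h
      rw [hRx, ← RCLike.re_to_complex, inner_self_eq_norm_sq]
    rw [e2]
    have e3 : (inner ℂ (A x) x : ℂ) = inner ℂ x (adjoint A x) := by
      rw [ContinuousLinearMap.adjoint_inner_right]
    rw [Complex.one_re, one_mul, e3]
    calc ‖(inner ℂ x (adjoint A x) : ℂ)‖ ^ 2 ≤ (‖x‖ * ‖adjoint A x‖) ^ 2 := by
          gcongr; exact norm_inner_le_norm _ _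
      _ = ‖adjoint A x‖ ^ 2 := by rw [hx]; ring
  -- now 0 < α
  have hαpos : 0 < α := lt_of_le_of_ne h0 (Ne.symm hα0)
  have hBnn : 0 ≤ Complex.re (inner ℂ (B x) x : ℂ) := by
    have hB0 : (0 : H →L[ℂ] H) ≤ B :=
      cfc_nonneg fun t ht => Real.rpow_nonneg (hSnn t ht) _
    exact (Complex.nonneg_iff.mp (((ContinuousLinearMap.nonneg_iff_isPositive _).mp hB0).inner_nonneg_left x)).1
  have hCnn : 0 ≤ Complex.re (inner ℂ (C x) x : ℂ) := by
    have hC0 : (0 : H →L[ℂ] H) ≤ C :=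
      cfc_nonneg fun t ht => Real.rpow_nonneg (hRnn t ht) _
    exact (Complex.nonneg_iff.mp (((ContinuousLinearMap.nonneg_iff_isPositive _).mp hC0).inner_nonneg_left x)).1
  -- key ε-inequality
  have hkey : ∀ ε : ℝ, 0 < ε →
      ‖(inner ℂ (A x) x : ℂ)‖ ^ 2 ≤
        (Complex.re (inner ℂ (B x) x : ℂ) + ε ^ α) * Complex.re (inner ℂ (C x) x : ℂ) := by
    intro ε hε
    have hεadd : ∀ t ∈ spectrum ℝ S, (0:ℝ) < t + ε := fun t ht => by
      have := hSnn t ht; linarith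
    have hcontS : ∀ β : ℝ, ContinuousOn (fun t : ℝ => (t + ε) ^ β) (spectrum ℝ S) :=
      fun β => ((continuous_id.add continuous_const).continuousOn).rpow_const
        fun t ht => Or.inl (ne_of_gt (hεadd t ht))
    set E := cfc (fun t : ℝ => (t + ε) ^ (α / 2)) S with hEdef
    set Q := cfc (fun t : ℝ => (t + ε) ^ (-(α / 2))) S with hQdef
    have hEsa : IsSelfAdjoint E := cfc_predicate _ S
    have hQsa : IsSelfAdjoint Q := cfc_predicate _ S
    have hQE : Q * E = 1 := by
      rw [hQdef, hEdef, ← cfc_mul _ _ S (hcontS _) (hcontS _)]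
      calc cfc (fun t : ℝ => (t + ε) ^ (-(α / 2)) * (t + ε) ^ (α / 2)) S
          = cfc (fun _ : ℝ => (1:ℝ)) S := by
            apply cfc_congr
            intro t ht
            show (t + ε) ^ (-(α / 2)) * (t + ε) ^ (α / 2) = 1
            rw [← Real.rpow_add (hεadd t ht)]
            norm_num
        _ = 1 := cfc_const_one ℝ S hSsa
    have hxQE : Q (E x) = x := by
      have : (Q * E) x = x := by rw [hQE, ContinuousLinearMap.one_apply]
      rwa [ContinuousLinearMap.mul_apply] at this
    -- rewrite the inner ℂ product
    have hinner : (inner ℂ (A x) x : ℂ) = inner ℂ (E x) ((Q * adjoint A) x) := by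
      have hAx : A x = (A * Q) (E x) := by
        conv_lhs => rw [← hxQE]
        rfl
      have hadj : adjoint (A * Q) = Q * adjoint A := by
        rw [← star_eq_adjoint, ← star_eq_adjoint, star_mul, hQsa.star_eq]
      rw [hAx, ← ContinuousLinearMap.adjoint_inner_right (A * Q) (E x) x, hadj]
    have hCS : ‖(inner ℂ (A x) x : ℂ)‖ ≤ ‖E x‖ * ‖Q (adjoint A x)‖ := by
      rw [hinner]
      have : (Q * adjoint A) x = Q (adjoint A x) := rfl
      rw [this]
      exact norm_inner_le_norm _ _
    -- bound ‖E x‖²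
    have hEE : E * E = cfc (fun t : ℝ => (t + ε) ^ α) S := by
      rw [hEdef, ← cfc_mul _ _ S (hcontS _) (hcontS _)]
      apply cfc_congr
      intro t ht
      show (t + ε) ^ (α / 2) * (t + ε) ^ (α / 2) = (t + ε) ^ α
      rw [← Real.rpow_add (hεadd t ht)]
      norm_num
    have hEx : ‖E x‖ ^ 2 ≤ Complex.re (inner ℂ (B x) x : ℂ) + ε ^ α := by
      rw [stmt8_norm_sq_eq E hEsa x, hEE]
      have hle : cfc (fun t : ℝ => (t + ε) ^ α) S ≤ cfc (fun t : ℝ => t ^ α + ε ^ α) S := by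
        apply cfc_mono
        · intro t ht
          have h := stmt8_rpow_add_le (hSnn t ht) hε.le h0 h1
          exact h
        · exact hcontS α
        · exact hBcont.add continuousOn_const
      have := stmt8_re_inner_le hle x
      refine this.trans ?_
      have hsplit : cfc (fun t : ℝ => t ^ α + ε ^ α) S
          = B + algebraMap ℝ (H →L[ℂ] H) (ε ^ α) := by
        rw [cfc_add_const (ε ^ α) _ S hBcont hSsa, hBdef]
      rw [hsplit]
      have halg : Complex.re (inner ℂ ((algebraMap ℝ (H →L[ℂ] H) (ε ^ α)) x) x : ℂ)
          = ε ^ α := by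
        rw [Algebra.algebraMap_eq_smul_one]
        have e : ((ε ^ α) • (1 : H →L[ℂ] H)) x = (ε ^ α) • x := by
          rw [ContinuousLinearMap.smul_apply, ContinuousLinearMap.one_apply]
        rw [e, RCLike.real_smul_eq_coe_smul (K := ℂ), inner_smul_left,
          inner_self_eq_norm_sq_to_K, hx]
        simp
      rw [ContinuousLinearMap.add_apply, inner_add_left, Complex.add_re, halg]
    -- bound ‖Q (adjoint A x)‖²
    have hQQ : Q * Q = cfc (fun t : ℝ => (t + ε) ^ (-α)) S := by
      rw [hQdef, ← cfc_mul _ _ S (hcontS _) (hcontS _)]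
      apply cfc_congr
      intro t ht
      show (t + ε) ^ (-(α / 2)) * (t + ε) ^ (-(α / 2)) = (t + ε) ^ (-α)
      rw [← Real.rpow_add (hεadd t ht)]
      congr 1
      ring
    have hQx : ‖Q (adjoint A x)‖ ^ 2 ≤ Complex.re (inner ℂ (C x) x : ℂ) := by
      rw [stmt8_norm_sq_eq Q hQsa (adjoint A x), hQQ]
      set Q2 := cfc (fun t : ℝ => (t + ε) ^ (-α)) S with hQ2def
      have e1 : (inner ℂ (Q2 (adjoint A x)) (adjoint A x) : ℂ)
          = inner ℂ ((A * Q2 * adjoint A) x) x := by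
        have h := ContinuousLinearMap.adjoint_inner_right A (Q2 (adjoint A x)) x
        exact h
      rw [e1]
      have hMIcc : ContinuousOn (fun t : ℝ => (t + ε) ^ (-α)) (Set.Icc 0 M) :=
        ((continuous_id.add continuous_const).continuousOn).rpow_const
          fun t ht => Or.inl (by have := ht.1; exact ne_of_gt (show (0:ℝ) < t + ε by linarith))
      have hcomm : A * Q2 = cfc (fun t : ℝ => (t + ε) ^ (-α)) R * A :=
        stmt8_cfc_comm A _ M hMIcc hS hR
      have hasm : A * Q2 * adjoint A = cfc (fun t : ℝ => (t + ε) ^ (-α)) R * R := by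
        rw [hcomm, mul_assoc, ← hRdef]
      have hcontR : ContinuousOn (fun t : ℝ => (t + ε) ^ (-α)) (spectrum ℝ R) :=
        ((continuous_id.add continuous_const).continuousOn).rpow_const
          fun t ht => Or.inl (by have := hRnn t ht; exact ne_of_gt (show (0:ℝ) < t + ε by linarith))
      have hidR : ContinuousOn (fun t : ℝ => t) (spectrum ℝ R) := continuousOn_id
      have hmul : cfc (fun t : ℝ => (t + ε) ^ (-α)) R * R
          = cfc (fun t : ℝ => (t + ε) ^ (-α) * t) R := by
        calc cfc (fun t : ℝ => (t + ε) ^ (-α)) R * R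
            = cfc (fun t : ℝ => (t + ε) ^ (-α)) R * cfc (fun t : ℝ => t) R := by
              rw [cfc_id' ℝ R hRsa]
          _ = cfc (fun t : ℝ => (t + ε) ^ (-α) * t) R :=
              (cfc_mul _ _ R hcontR hidR).symm
      have hle : cfc (fun t : ℝ => (t + ε) ^ (-α) * t) R ≤ C := by
        rw [hCdef]
        apply cfc_mono
        · intro t ht
          have htnn := hRnn t ht
          rcases eq_or_lt_of_le htnn with heq | hpos
          · rw [← heq]
            simp only [mul_zero]
            exact Real.rpow_nonneg le_rfl _
          · have hb1 : (t + ε) ^ (-α) ≤ t ^ (-α) :=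
              Real.rpow_le_rpow_of_nonpos hpos (by linarith) (by linarith)
            have hb2 : t ^ (-α) * t = t ^ (1 - α) := by
              rw [show (1 - α) = -α + 1 by ring, Real.rpow_add hpos, Real.rpow_one]
            calc (t + ε) ^ (-α) * t ≤ t ^ (-α) * t := by
                  exact mul_le_mul_of_nonneg_right hb1 htnn
              _ = t ^ (1 - α) := hb2
        · exact hcontR.mul hidR
        · exact hCcont
      rw [hasm, hmul]
      exact stmt8_re_inner_le hle x
    -- combine
    calc ‖(inner ℂ (A x) x : ℂ)‖ ^ 2 ≤ (‖E x‖ * ‖Q (adjoint A x)‖) ^ 2 := by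
          gcongr
      _ = ‖E x‖ ^ 2 * ‖Q (adjoint A x)‖ ^ 2 := by ring
      _ ≤ (Complex.re (inner ℂ (B x) x : ℂ) + ε ^ α) * Complex.re (inner ℂ (C x) x : ℂ) := by
          apply mul_le_mul hEx hQx (sq_nonneg _)
          have : (0:ℝ) ≤ ε ^ α := Real.rpow_nonneg hε.le α
          linarith
  -- take ε → 0
  refine le_of_forall_pos_le_add ?_
  intro δ hδ
  set cx := Complex.re (inner ℂ (C x) x : ℂ)
  have hη : 0 < δ / (cx + 1) := by positivity
  have hεδ : 0 < (δ / (cx + 1)) ^ α⁻¹ := Real.rpow_pos_of_pos hη _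
  have h := hkey ((δ / (cx + 1)) ^ α⁻¹) hεδ
  have hpow : ((δ / (cx + 1)) ^ α⁻¹) ^ α = δ / (cx + 1) := by
    rw [← Real.rpow_mul hη.le, inv_mul_cancel₀ (ne_of_gt hαpos), Real.rpow_one]
  rw [hpow] at h
  refine h.trans ?_
  have hfrac : δ / (cx + 1) * cx ≤ δ := by
    rw [div_mul_eq_mul_div, div_le_iff₀ (by positivity)]
    nlinarith
  nlinarith [hBnn, hCnn]

end Kato

theorem stmt8 (A : H →L[ℂ] H) (α : ℝ) (hα : α ∈ Set.Icc (0:ℝ) 1) :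
    (nrad A) ^ 2
      ≤ (1/4) * ‖opow (oabs A) (4 * α) + opow (oabs (adjoint A)) (4 * (1 - α))‖
        + (1/2) * nrad (opow (oabs (adjoint A)) (2 * (1 - α)) * opow (oabs A) (2 * α)) := by
  obtain ⟨h0, h1⟩ := hα
  rcases subsingleton_or_nontrivial H with hH | hH
  · have hempty : IsEmpty {x : H // ‖x‖ = 1} := by
      constructor
      rintro ⟨x, hx⟩
      rw [Subsingleton.elim x 0, norm_zero] at hx
      norm_num at hx
    have hA0 : nrad A = 0 := Real.iSup_of_isEmpty _
    have h2 : nrad (opow (oabs (adjoint A)) (2 * (1 - α)) * opow (oabs A) (2 * α)) = 0 :=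
      Real.iSup_of_isEmpty _
    rw [hA0, h2]
    have hn := norm_nonneg (opow (oabs A) (4 * α) + opow (oabs (adjoint A)) (4 * (1 - α)))
    nlinarith
  -- nontrivial case
  set S := adjoint A * A with hSdef
  set R := A * adjoint A with hRdef
  have hSsa : IsSelfAdjoint S := by
    rw [hSdef, ← star_eq_adjoint]; exact IsSelfAdjoint.star_mul_self A
  have hRsa : IsSelfAdjoint R := by
    rw [hRdef, ← star_eq_adjoint]; exact IsSelfAdjoint.mul_star_self A
  have hSpos : (0 : H →L[ℂ] H) ≤ S := by
    rw [hSdef, ← star_eq_adjoint]; exact star_mul_self_nonneg A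
  have hRpos : (0 : H →L[ℂ] H) ≤ R := by
    rw [hRdef, ← star_eq_adjoint]; exact mul_star_self_nonneg A
  set M : ℝ := ‖A‖ * ‖A‖ with hMdef
  have hnormS : ‖S‖ ≤ M := by
    rw [hSdef]
    calc ‖adjoint A * A‖ ≤ ‖adjoint A‖ * ‖A‖ := norm_mul_le _ _
      _ = ‖A‖ * ‖A‖ := by rw [ContinuousLinearMap.adjoint.norm_map A]
  have hnormR : ‖R‖ ≤ M := by
    rw [hRdef]
    calc ‖A * adjoint A‖ ≤ ‖A‖ * ‖adjoint A‖ := norm_mul_le _ _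
      _ = ‖A‖ * ‖A‖ := by rw [ContinuousLinearMap.adjoint.norm_map A]
  have hSspec : spectrum ℝ S ⊆ Set.Icc 0 M := by
    intro t ht
    refine ⟨spectrum_nonneg_of_nonneg hSpos ht, ?_⟩
    have hb := spectrum.norm_le_norm_of_mem ht
    rw [Real.norm_eq_abs] at hb
    exact (le_abs_self t).trans (hb.trans hnormS)
  have hRspec : spectrum ℝ R ⊆ Set.Icc 0 M := by
    intro t ht
    refine ⟨spectrum_nonneg_of_nonneg hRpos ht, ?_⟩
    have hb := spectrum.norm_le_norm_of_mem ht
    rw [Real.norm_eq_abs] at hb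
    exact (le_abs_self t).trans (hb.trans hnormR)
  have hSnn : ∀ t ∈ spectrum ℝ S, 0 ≤ t := fun t ht => (hSspec ht).1
  have hRnn : ∀ t ∈ spectrum ℝ R, 0 ≤ t := fun t ht => (hRspec ht).1
  set B := cfc (fun t : ℝ => t ^ α) S with hBdef
  set C := cfc (fun t : ℝ => t ^ (1 - α)) R with hCdef
  have hBsa : IsSelfAdjoint B := cfc_predicate _ S
  have hCsa : IsSelfAdjoint C := cfc_predicate _ R
  -- identification of the opow/oabs expressions
  have hgenS : ∀ r : ℝ, 0 ≤ r → opow (oabs A) (2 * r) = cfc (fun t : ℝ => t ^ r) S := by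
    intro r hr
    show cfc (fun t : ℝ => t ^ (2 * r)) (cfc Real.sqrt (adjoint A * A)) = _
    rw [← hSdef]
    rw [← cfc_comp' (fun t : ℝ => t ^ (2 * r)) Real.sqrt S
      (continuousOn_id.rpow_const fun t _ => Or.inr (by positivity))
      Real.continuous_sqrt.continuousOn hSsa]
    apply cfc_congr
    intro t ht
    show Real.sqrt t ^ (2 * r) = t ^ r
    rw [Real.sqrt_eq_rpow, ← Real.rpow_mul (hSnn t ht)]
    congr 1
    ring
  have hgenR : ∀ r : ℝ, 0 ≤ r →
      opow (oabs (adjoint A)) (2 * r) = cfc (fun t : ℝ => t ^ r) R := by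
    intro r hr
    show cfc (fun t : ℝ => t ^ (2 * r))
      (cfc Real.sqrt (adjoint (adjoint A) * adjoint A)) = _
    rw [adjoint_adjoint, ← hRdef]
    rw [← cfc_comp' (fun t : ℝ => t ^ (2 * r)) Real.sqrt R
      (continuousOn_id.rpow_const fun t _ => Or.inr (by positivity))
      Real.continuous_sqrt.continuousOn hRsa]
    apply cfc_congr
    intro t ht
    show Real.sqrt t ^ (2 * r) = t ^ r
    rw [Real.sqrt_eq_rpow, ← Real.rpow_mul (hRnn t ht)]
    congr 1
    ring
  have hBeq : opow (oabs A) (2 * α) = B := hgenS α h0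
  have hCeq : opow (oabs (adjoint A)) (2 * (1 - α)) = C := hgenR (1 - α) (by linarith)
  have hacontS : ContinuousOn (fun t : ℝ => t ^ α) (spectrum ℝ S) :=
    continuousOn_id.rpow_const fun t _ => Or.inr h0
  have hacontR : ContinuousOn (fun t : ℝ => t ^ (1 - α)) (spectrum ℝ R) :=
    continuousOn_id.rpow_const fun t _ => Or.inr (by linarith)
  have hBBeq : opow (oabs A) (4 * α) = B * B := by
    have h := hgenS (2 * α) (by linarith)
    rw [show (2 : ℝ) * (2 * α) = 4 * α by ring] at h
    rw [h, hBdef, ← cfc_mul (fun t : ℝ => t ^ α) (fun t : ℝ => t ^ α) S hacontS hacontS]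
    apply cfc_congr
    intro t ht
    show t ^ (2 * α) = t ^ α * t ^ α
    rw [show (2 : ℝ) * α = α + α by ring, Real.rpow_add_of_nonneg (hSnn t ht) h0 h0]
  have hCCeq : opow (oabs (adjoint A)) (4 * (1 - α)) = C * C := by
    have h := hgenR (2 * (1 - α)) (by linarith)
    rw [show (2 : ℝ) * (2 * (1 - α)) = 4 * (1 - α) by ring] at h
    rw [h, hCdef,
      ← cfc_mul (fun t : ℝ => t ^ (1 - α)) (fun t : ℝ => t ^ (1 - α)) R hacontR hacontR]
    apply cfc_congr
    intro t ht
    show t ^ (2 * (1 - α)) = t ^ (1 - α) * t ^ (1 - α)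
    rw [show (2 : ℝ) * (1 - α) = (1 - α) + (1 - α) by ring,
      Real.rpow_add_of_nonneg (hRnn t ht) (by linarith) (by linarith)]
  rw [hBBeq, hCCeq, hBeq, hCeq]
  -- positivity facts
  have hB0 : (0 : H →L[ℂ] H) ≤ B :=
    cfc_nonneg fun t ht => Real.rpow_nonneg (hSnn t ht) _
  have hC0 : (0 : H →L[ℂ] H) ≤ C :=
    cfc_nonneg fun t ht => Real.rpow_nonneg (hRnn t ht) _
  -- bound for each unit vector
  have hbddCB : BddAbove (Set.range fun y : {x : H // ‖x‖ = 1} =>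
      ‖(inner ℂ ((C * B) y) (y : H) : ℂ)‖) := by
    refine ⟨‖C * B‖, ?_⟩
    rintro _ ⟨y, rfl⟩
    calc ‖(inner ℂ ((C * B) y) (y : H) : ℂ)‖ ≤ ‖(C * B) (y : H)‖ * ‖(y : H)‖ :=
          norm_inner_le_norm _ _
      _ ≤ ‖C * B‖ * ‖(y : H)‖ * ‖(y : H)‖ := by gcongr; exact (C * B).le_opNorm _
      _ = ‖C * B‖ := by rw [y.2]; ring
  have hnradCB0 : 0 ≤ nrad (C * B) := Real.iSup_nonneg fun y => norm_nonneg _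
  set K : ℝ := (1/4) * ‖B * B + C * C‖ + (1/2) * nrad (C * B) with hKdef
  have hKnn : 0 ≤ K := by positivity
  have key : ∀ x : H, ‖x‖ = 1 → ‖(inner ℂ (A x) x : ℂ)‖ ^ 2 ≤ K := by
    intro x hx
    have hkato := stmt8_kato A h0 h1 hSspec hRspec x hx
    rw [← hBdef, ← hCdef] at hkato
    -- real parts are nonnegative
    have hBnn : 0 ≤ Complex.re (inner ℂ (B x) x : ℂ) :=
      (Complex.nonneg_iff.mp (((ContinuousLinearMap.nonneg_iff_isPositive _).mp hB0).inner_nonneg_left x)).1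
    have hCnn : 0 ≤ Complex.re (inner ℂ (C x) x : ℂ) :=
      (Complex.nonneg_iff.mp (((ContinuousLinearMap.nonneg_iff_isPositive _).mp hC0).inner_nonneg_left x)).1
    -- pass to moduli
    have hstep1 : Complex.re (inner ℂ (B x) x : ℂ) * Complex.re (inner ℂ (C x) x : ℂ)
        ≤ ‖(inner ℂ (B x) x : ℂ) * (inner ℂ x (C x) : ℂ)‖ := by
      rw [norm_mul]
      have h1 : Complex.re (inner ℂ (B x) x : ℂ) ≤ ‖(inner ℂ (B x) x : ℂ)‖ :=
        Complex.re_le_norm _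
      have h2 : Complex.re (inner ℂ (C x) x : ℂ) ≤ ‖(inner ℂ x (C x) : ℂ)‖ := by
        rw [← inner_conj_symm, Complex.conj_re]
        exact Complex.re_le_norm _
      exact mul_le_mul h1 h2 hCnn (norm_nonneg _)
    -- Buzano
    have hbuz := stmt8_buzano x (B x) (C x) hx
    -- AM-GM
    have hamgm : ‖B x‖ * ‖C x‖ ≤ (‖B x‖ ^ 2 + ‖C x‖ ^ 2) / 2 := by nlinarith [sq_nonneg (‖B x‖ - ‖C x‖)]
    -- norm bound
    have hsum : ‖B x‖ ^ 2 + ‖C x‖ ^ 2 ≤ ‖B * B + C * C‖ := by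
      rw [stmt8_norm_sq_eq B hBsa x, stmt8_norm_sq_eq C hCsa x]
      have e : Complex.re (inner ℂ ((B * B) x) x : ℂ) + Complex.re (inner ℂ ((C * C) x) x : ℂ)
          = Complex.re (inner ℂ ((B * B + C * C) x) x : ℂ) := by
        rw [ContinuousLinearMap.add_apply, inner_add_left, Complex.add_re]
      rw [e]
      calc Complex.re (inner ℂ ((B * B + C * C) x) x : ℂ)
          ≤ ‖(inner ℂ ((B * B + C * C) x) x : ℂ)‖ := Complex.re_le_norm _
        _ ≤ ‖(B * B + C * C) x‖ * ‖x‖ := norm_inner_le_norm _ _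
        _ ≤ ‖B * B + C * C‖ * ‖x‖ * ‖x‖ := by gcongr; exact (B * B + C * C).le_opNorm x
        _ = ‖B * B + C * C‖ := by rw [hx]; ring
    -- cross term
    have hcross : ‖(inner ℂ (B x) (C x) : ℂ)‖ ≤ nrad (C * B) := by
      have e : (inner ℂ ((C * B) x) x : ℂ) = inner ℂ (B x) (C x) := by
        have h := ContinuousLinearMap.adjoint_inner_left C (x) (B x)
        rw [hCsa.adjoint_eq] at h
        rw [ContinuousLinearMap.mul_apply]
        exact h
      rw [← e]
      exact le_ciSup hbddCB ⟨x, hx⟩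
    calc ‖(inner ℂ (A x) x : ℂ)‖ ^ 2
        ≤ Complex.re (inner ℂ (B x) x : ℂ) * Complex.re (inner ℂ (C x) x : ℂ) := hkato
      _ ≤ ‖(inner ℂ (B x) x : ℂ) * (inner ℂ x (C x) : ℂ)‖ := hstep1
      _ ≤ (‖B x‖ * ‖C x‖ + ‖(inner ℂ (B x) (C x) : ℂ)‖) / 2 := hbuz
      _ ≤ ((‖B * B + C * C‖) / 2 + nrad (C * B)) / 2 := by
          have := hamgm.trans (by linarith : (‖B x‖ ^ 2 + ‖C x‖ ^ 2) / 2 ≤ ‖B * B + C * C‖ / 2)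
          linarith [hcross]
      _ = K := by rw [hKdef]; ring
  -- conclude
  have hnradA : nrad A ≤ Real.sqrt K := by
    apply Real.iSup_le _ (Real.sqrt_nonneg K)
    rintro ⟨x, hx⟩
    rw [← Real.sqrt_sq (norm_nonneg ((inner ℂ (A x) x : ℂ)))]
    exact Real.sqrt_le_sqrt (key x hx)
  have hfin : (nrad A) ^ 2 ≤ K := by
    calc (nrad A) ^ 2 ≤ Real.sqrt K ^ 2 := by
          apply pow_le_pow_left₀ (Real.iSup_nonneg fun y => norm_nonneg _) hnradA
      _ = K := Real.sq_sqrt hKnn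
  exact hfin
end

section
/- Let A be a bounded linear operator on a complex Hilbert space H. Then w(A)² ≤ (1/4)‖ |A|² + |A*|² ‖ + (1/2) w( |A*| |A| ). -/
open ContinuousLinearMap Complex

variable {H : Type*} [NormedAddCommGroup H] [InnerProductSpace ℂ H] [CompleteSpace H]

open Polynomial in
lemma aux_inter_pow (A : H →L[ℂ] H) (n : ℕ) :
    A * (adjoint A * A) ^ n = (A * adjoint A) ^ n * A := by
  induction n with
  | zero => simp
  | succ n ih =>
    rw [pow_succ, pow_succ, ← mul_assoc, ih]
    noncomm_ring

open Polynomial in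
lemma aux_inter_poly (A : H →L[ℂ] H) (p : ℝ[X]) :
    A * (aeval (adjoint A * A) p) = (aeval (A * adjoint A) p) * A := by
  induction p using Polynomial.induction_on with
  | C r =>
    simp only [aeval_C]
    rw [Algebra.algebraMap_eq_smul_one]
    simp [mul_smul_comm, smul_mul_assoc]
  | add p q hp hq => simp only [map_add, mul_add, add_mul, hp, hq]
  | monomial n r _ =>
    simp only [map_mul, aeval_C, map_pow, aeval_X]
    rw [Algebra.algebraMap_eq_smul_one]
    simp only [smul_mul_assoc, one_mul, mul_smul_comm]
    rw [aux_inter_pow]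

lemma aux_spec_mem_Icc [Nontrivial H] (T : H →L[ℂ] H) {M : ℝ} (hM : ‖T‖ ≤ M) :
    ∀ t ∈ spectrum ℝ T, t ∈ Set.Icc (-M) M := by
  intro t ht
  have := spectrum.norm_le_norm_of_mem ht
  rw [Real.norm_eq_abs] at this
  exact Set.mem_Icc.mpr (abs_le.mp (this.trans hM))

open Polynomial in
lemma aux_intertwine [Nontrivial H] (A : H →L[ℂ] H) (f : ℝ → ℝ) (hf : Continuous f) :
    A * cfc f (adjoint A * A) = cfc f (A * adjoint A) * A := by
  have hT : IsSelfAdjoint (adjoint A * A) := by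
    rw [← star_eq_adjoint]; exact IsSelfAdjoint.star_mul_self A
  have hT' : IsSelfAdjoint (A * adjoint A) := by
    rw [← star_eq_adjoint]; exact IsSelfAdjoint.mul_star_self A
  set M : ℝ := max ‖adjoint A * A‖ ‖A * adjoint A‖ with hMdef
  have h1 := aux_spec_mem_Icc (adjoint A * A)
    (le_max_left ‖adjoint A * A‖ ‖A * adjoint A‖)
  have h2 := aux_spec_mem_Icc (A * adjoint A)
    (le_max_right ‖adjoint A * A‖ ‖A * adjoint A‖)
  rw [← sub_eq_zero, ← norm_le_zero_iff]
  refine le_of_forall_pos_le_add ?_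
  intro ε hε
  have hε' : 0 < ε / (2 * ‖A‖ + 1) := by positivity
  obtain ⟨p, hp⟩ := exists_polynomial_near_of_continuousOn (-M) M f hf.continuousOn _ hε'
  have hA : A * cfc p.eval (adjoint A * A) = cfc p.eval (A * adjoint A) * A := by
    rw [cfc_polynomial p (adjoint A * A) hT, cfc_polynomial p (A * adjoint A) hT',
      aux_inter_poly]
  have key : ∀ (T : H →L[ℂ] H), IsSelfAdjoint T →
      (∀ t ∈ spectrum ℝ T, t ∈ Set.Icc (-M) M) →
      ‖cfc f T - cfc p.eval T‖ ≤ ε / (2 * ‖A‖ + 1) := by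
    intro T hT hspec
    rw [← cfc_sub f p.eval T]
    exact norm_cfc_le hε'.le fun t ht => by
      rw [Real.norm_eq_abs, abs_sub_comm]
      exact (hp t (hspec t ht)).le
  calc ‖A * cfc f (adjoint A * A) - cfc f (A * adjoint A) * A‖
      = ‖A * (cfc f (adjoint A * A) - cfc p.eval (adjoint A * A))
          + (cfc p.eval (A * adjoint A) - cfc f (A * adjoint A)) * A‖ := by
        rw [mul_sub, sub_mul, hA]; congr 1; abel
    _ ≤ ‖A * (cfc f (adjoint A * A) - cfc p.eval (adjoint A * A))‖
          + ‖(cfc p.eval (A * adjoint A) - cfc f (A * adjoint A)) * A‖ := norm_add_le _ _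
    _ ≤ ‖A‖ * (ε / (2 * ‖A‖ + 1)) + (ε / (2 * ‖A‖ + 1)) * ‖A‖ := by
        gcongr
        · exact (norm_mul_le _ _).trans (by gcongr; exact key _ hT h1)
        · refine (norm_mul_le _ _).trans ?_
          gcongr
          rw [norm_sub_rev]
          exact key _ hT' h2
    _ ≤ 0 + ε := by
        rw [zero_add]
        have h : ‖A‖ * (ε / (2 * ‖A‖ + 1)) + ε / (2 * ‖A‖ + 1) * ‖A‖
            = ε * ((2 * ‖A‖) / (2 * ‖A‖ + 1)) := by ring
        rw [h]
        have hle : (2 * ‖A‖) / (2 * ‖A‖ + 1) ≤ 1 :=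
          div_le_one_of_le₀ (by linarith [norm_nonneg A]) (by positivity)
        nlinarith [norm_nonneg A]

lemma aux_sq_rep (T : H →L[ℂ] H) (hT : IsSelfAdjoint T) (g : ℝ → ℝ) (hg : Continuous g)
    (hg0 : ∀ t ∈ spectrum ℝ T, 0 ≤ g t) (x : H) :
    (inner ℂ (cfc g T x) x : ℂ) = ((‖cfc (fun t => Real.sqrt (g t)) T x‖ : ℝ) : ℂ) ^ 2 := by
  set S := cfc (fun t => Real.sqrt (g t)) T with hSdef
  have hS : IsSelfAdjoint S := cfc_predicate _ T
  have hcont : Continuous fun t => Real.sqrt (g t) := Real.continuous_sqrt.comp hg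
  have hSS : S * S = cfc g T := by
    rw [hSdef, ← cfc_mul _ _ T hcont.continuousOn hcont.continuousOn]
    exact cfc_congr fun t ht => Real.mul_self_sqrt (hg0 t ht)
  rw [← hSS, ContinuousLinearMap.mul_apply]
  nth_rewrite 1 [← hS.adjoint_eq]
  rw [adjoint_inner_left, inner_self_eq_norm_sq_to_K]
  norm_cast

lemma aux_inner_cfc_nonneg (T : H →L[ℂ] H) (hT : IsSelfAdjoint T) (g : ℝ → ℝ)
    (hg : Continuous g) (hg0 : ∀ t ∈ spectrum ℝ T, 0 ≤ g t) (x : H) :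
    ∃ r : ℝ, 0 ≤ r ∧ (inner ℂ (cfc g T x) x : ℂ) = (r : ℂ) := by
  refine ⟨‖cfc (fun t => Real.sqrt (g t)) T x‖ ^ 2, by positivity, ?_⟩
  rw [aux_sq_rep T hT g hg hg0 x]; push_cast; ring

lemma aux_buzano (u v x : H) (hx : ‖x‖ = 1) :
    ‖(inner ℂ u x : ℂ) * (inner ℂ x v : ℂ)‖ ≤ (‖u‖ * ‖v‖ + ‖(inner ℂ u v : ℂ)‖) / 2 := by
  set w : H := ((2 : ℂ) * (inner ℂ x u : ℂ)) • x - u with hw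
  have hxx : (inner ℂ x x : ℂ) = 1 := by
    rw [inner_self_eq_norm_sq_to_K, hx]; norm_num
  have hww : (inner ℂ w w : ℂ) = ((‖u‖ : ℝ) : ℂ) ^ 2 := by
    rw [hw, inner_sub_sub_self]
    simp only [inner_smul_left, inner_smul_right, map_mul, map_ofNat]
    simp only [hxx, inner_self_eq_norm_sq_to_K]
    rw [← inner_conj_symm u x]
    ring_nf
    norm_cast
  have hnw : ‖w‖ = ‖u‖ := by
    rw [inner_self_eq_norm_sq_to_K] at hww
    have h5 : ((‖w‖^2 : ℝ) : ℂ) = ((‖u‖^2 : ℝ) : ℂ) := by push_cast; exact hww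
    have := Complex.ofReal_inj.mp h5
    nlinarith [norm_nonneg w, norm_nonneg u]
  have hkey : (2 : ℂ) * ((inner ℂ u x : ℂ) * (inner ℂ x v : ℂ))
      = (inner ℂ w v : ℂ) + (inner ℂ u v : ℂ) := by
    simp only [hw, inner_sub_left, inner_smul_left, map_mul, map_ofNat, inner_conj_symm]
    ring
  have h6 : (2:ℝ) * ‖(inner ℂ u x : ℂ) * (inner ℂ x v : ℂ)‖
      = ‖(inner ℂ w v : ℂ) + (inner ℂ u v : ℂ)‖ := by
    rw [← hkey, norm_mul]
    norm_num
  have h7 : ‖(inner ℂ w v : ℂ) + (inner ℂ u v : ℂ)‖ ≤ ‖u‖ * ‖v‖ + ‖(inner ℂ u v : ℂ)‖ := by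
    refine (norm_add_le _ _).trans ?_
    gcongr
    exact (norm_inner_le_norm w v).trans (by rw [hnw])
  linarith

lemma aux_nrad_nonneg (T : H →L[ℂ] H) : 0 ≤ nrad T :=
  Real.iSup_nonneg fun _ => norm_nonneg _

lemma aux_le_nrad (T : H →L[ℂ] H) (x : H) (hx : ‖x‖ = 1) :
    ‖(inner ℂ (T x) x : ℂ)‖ ≤ nrad T := by
  have hb : BddAbove (Set.range fun y : {y : H // ‖y‖ = 1} => ‖(inner ℂ (T y) (y : H) : ℂ)‖) := by
    refine ⟨‖T‖, ?_⟩
    rintro r ⟨y, rfl⟩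
    calc ‖(inner ℂ (T y) (y : H) : ℂ)‖ ≤ ‖T (y : H)‖ * ‖(y : H)‖ := norm_inner_le_norm _ _
      _ ≤ ‖T‖ * ‖(y : H)‖ * ‖(y : H)‖ := by gcongr; exact T.le_opNorm _
      _ = ‖T‖ := by rw [y.2]; ring
  exact le_ciSup hb (⟨x, hx⟩ : {y : H // ‖y‖ = 1})

lemma aux_nrad_le (T : H →L[ℂ] H) (c : ℝ) (hc : 0 ≤ c)
    (h : ∀ x : H, ‖x‖ = 1 → ‖(inner ℂ (T x) x : ℂ)‖ ≤ c) : nrad T ≤ c :=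
  Real.iSup_le (fun x => h x x.2) hc

set_option maxHeartbeats 2000000 in
lemma aux_main_ineq [Nontrivial H] (A : H →L[ℂ] H) (x : H) (hx : ‖x‖ = 1) :
    ‖(inner ℂ (A x) x : ℂ)‖ ^ 2
      ≤ (1/4) * ‖adjoint A * A + A * adjoint A‖
        + (1/2) * nrad (oabs (adjoint A) * oabs A) := by
  set T := adjoint A * A with hTdef
  set T' := A * adjoint A with hT'def
  have hT : IsSelfAdjoint T := by
    rw [hTdef, ← star_eq_adjoint]; exact IsSelfAdjoint.star_mul_self A
  have hT' : IsSelfAdjoint T' := by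
    rw [hT'def, ← star_eq_adjoint]; exact IsSelfAdjoint.mul_star_self A
  have hTspec : ∀ t ∈ spectrum ℝ T, 0 ≤ t := by
    intro t ht
    rw [hTdef, ← star_eq_adjoint] at ht
    exact spectrum_nonneg_of_nonneg (star_mul_self_nonneg A) ht
  have hT'spec : ∀ t ∈ spectrum ℝ T', 0 ≤ t := by
    intro t ht
    have h : T' = star (adjoint A) * adjoint A := by
      rw [hT'def, star_eq_adjoint, adjoint_adjoint]
    rw [h] at ht
    exact spectrum_nonneg_of_nonneg (star_mul_self_nonneg (adjoint A)) ht
  set B := oabs A with hBdef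
  set C := oabs (adjoint A) with hCdef
  have hB : B = cfc Real.sqrt T := rfl
  have hC : C = cfc Real.sqrt T' := by rw [hCdef, oabs, adjoint_adjoint]
  have hBsa : IsSelfAdjoint B := by rw [hB]; exact cfc_predicate _ T
  have hCsa : IsSelfAdjoint C := by rw [hC]; exact cfc_predicate _ T'
  obtain ⟨β, hβ0, hβ⟩ := aux_inner_cfc_nonneg T hT Real.sqrt Real.continuous_sqrt
    (fun t _ => Real.sqrt_nonneg t) x
  obtain ⟨γ, hγ0, hγ⟩ := aux_inner_cfc_nonneg T' hT' Real.sqrt Real.continuous_sqrt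
    (fun t _ => Real.sqrt_nonneg t) x
  rw [← hB] at hβ
  rw [← hC] at hγ
  -- step 1 : mixed Schwarz with ε
  have step1 : ∀ ε : ℝ, 0 < ε → ‖(inner ℂ (A x) x : ℂ)‖ ^ 2 ≤ (β + ε) * γ := by
    intro ε hε
    set g : ℝ → ℝ := fun t => (Real.sqrt t + ε)⁻¹ with hgdef
    have hgne : ∀ t : ℝ, Real.sqrt t + ε ≠ 0 := fun t =>
      ne_of_gt (lt_of_lt_of_le hε (le_add_of_nonneg_left (Real.sqrt_nonneg t)))
    have hgc : Continuous g :=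
      Continuous.inv₀ (Real.continuous_sqrt.add continuous_const) hgne
    set S := cfc (fun t => Real.sqrt (Real.sqrt t + ε)) T with hSdef
    set R := cfc g T with hRdef
    have hScont : Continuous fun t => Real.sqrt (Real.sqrt t + ε) :=
      Real.continuous_sqrt.comp (Real.continuous_sqrt.add continuous_const)
    have hSsa : IsSelfAdjoint S := cfc_predicate _ T
    have hRsa : IsSelfAdjoint R := cfc_predicate _ T
    have hSS : S * S = cfc (fun t => Real.sqrt t + ε) T := by
      rw [hSdef, ← cfc_mul _ _ T hScont.continuousOn hScont.continuousOn]
      exact cfc_congr fun t _ => Real.mul_self_sqrt (by positivity)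
    have hRSS : R * (S * S) = 1 := by
      rw [hSS, hRdef, ← cfc_mul g (fun t => Real.sqrt t + ε) T hgc.continuousOn
        (Real.continuous_sqrt.add continuous_const).continuousOn]
      calc cfc (fun t => g t * (Real.sqrt t + ε)) T = cfc (fun _ : ℝ => (1:ℝ)) T :=
            cfc_congr fun t _ => inv_mul_cancel₀ (hgne t)
        _ = 1 := cfc_const_one ℝ T
    have hAfact : ((A * R) * S) * S = A := by
      rw [mul_assoc, mul_assoc, hRSS, mul_one]
    set Q := S * (R * adjoint A) with hQdef
    have hQadj : adjoint Q = (A * R) * S := by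
      rw [← star_eq_adjoint, hQdef]
      simp only [star_mul, ← star_eq_adjoint, star_star, hSsa.star_eq, hRsa.star_eq]
      try rw [mul_assoc]
    have hinner : (inner ℂ (A x) x : ℂ) = inner ℂ (S x) (Q x) := by
      conv_lhs => rw [← hAfact]
      rw [ContinuousLinearMap.mul_apply, ← hQadj, adjoint_inner_left]
    have hCS : ‖(inner ℂ (A x) x : ℂ)‖ ≤ ‖S x‖ * ‖Q x‖ := by
      rw [hinner]; exact norm_inner_le_norm _ _
    have hSx : ‖S x‖ ^ 2 = β + ε := by
      have e1 : (inner ℂ (S (S x)) x : ℂ) = ((‖S x‖ : ℝ) : ℂ) ^ 2 := by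
        nth_rewrite 1 [← hSsa.adjoint_eq]
        rw [adjoint_inner_left, inner_self_eq_norm_sq_to_K]
        norm_cast
      have e2 : (inner ℂ (S (S x)) x : ℂ) = (β : ℂ) + (ε : ℂ) := by
        have h3 : S (S x) = (cfc Real.sqrt T + algebraMap ℝ (H →L[ℂ] H) ε) x := by
          rw [← ContinuousLinearMap.mul_apply, hSS, cfc_add T Real.sqrt (fun _ => ε)
            Real.continuous_sqrt.continuousOn continuousOn_const, cfc_const ε T]
        rw [h3, add_apply, inner_add_left, ← hB, hβ]
        congr 1
        rw [Algebra.algebraMap_eq_smul_one, smul_apply, ContinuousLinearMap.one_apply,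
          ← algebraMap_smul ℂ ε x, Complex.coe_algebraMap, inner_smul_left,
          Complex.conj_ofReal, inner_self_eq_norm_sq_to_K, hx]
        norm_num
      have e3 : ((‖S x‖ ^ 2 : ℝ) : ℂ) = ((β + ε : ℝ) : ℂ) := by
        push_cast
        rw [← e1, ← e2]
      exact_mod_cast e3
    have hQx : ‖Q x‖ ^ 2 ≤ γ := by
      have hQQ : adjoint Q * Q = cfc (fun s => g s * s) T' := by
        have h1 : adjoint Q * Q = A * (R * (S * S)) * (R * adjoint A) := by
          rw [hQadj, hQdef]; noncomm_ring
        rw [h1, hRSS, mul_one, ← mul_assoc, aux_intertwine A g hgc]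
        have h2 : cfc g T' * A * adjoint A = cfc g T' * T' := by rw [mul_assoc, ← hT'def]
        rw [h2]
        nth_rewrite 2 [← cfc_id' ℝ T' hT']
        rw [← cfc_mul _ _ T' hgc.continuousOn (continuous_id'.continuousOn)]
      have e1 : (inner ℂ (adjoint Q (Q x)) x : ℂ) = ((‖Q x‖ : ℝ) : ℂ) ^ 2 := by
        rw [adjoint_inner_left, inner_self_eq_norm_sq_to_K]
        norm_cast
      have hnn : ∀ s ∈ spectrum ℝ T', 0 ≤ Real.sqrt s - g s * s := by
        intro s hs
        have hs0 : 0 ≤ s := hT'spec s hs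
        have hss : Real.sqrt s * Real.sqrt s = s := Real.mul_self_sqrt hs0
        rw [hgdef, sub_nonneg,
          inv_mul_le_iff₀ (lt_of_lt_of_le hε (le_add_of_nonneg_left (Real.sqrt_nonneg s)))]
        nlinarith [Real.sqrt_nonneg s, hε.le]
      obtain ⟨δ, hδ0, hδ⟩ := aux_inner_cfc_nonneg T' hT' (fun s => Real.sqrt s - g s * s)
        (Real.continuous_sqrt.sub (hgc.mul continuous_id)) hnn x
      have hsub : cfc (fun s => Real.sqrt s - g s * s) T'
          = cfc Real.sqrt T' - cfc (fun s => g s * s) T' :=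
        cfc_sub Real.sqrt (fun s => g s * s) T' Real.continuous_sqrt.continuousOn
          ((hgc.mul continuous_id).continuousOn)
      have e2 : ((‖Q x‖ : ℝ) : ℂ) ^ 2 = (γ : ℂ) - (δ : ℂ) := by
        rw [← e1, ← ContinuousLinearMap.mul_apply, hQQ]
        have h4 : (inner ℂ (cfc (fun s => g s * s) T' x) x : ℂ)
            = (inner ℂ (cfc Real.sqrt T' x) x : ℂ)
              - (inner ℂ (cfc (fun s => Real.sqrt s - g s * s) T' x) x : ℂ) := by
          rw [hsub, sub_apply, inner_sub_left]
          ring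
        rw [h4, hδ, ← hC, hγ]
      have e3 : ((‖Q x‖ ^ 2 : ℝ) : ℂ) = ((γ - δ : ℝ) : ℂ) := by push_cast; rw [← e2]
      have := Complex.ofReal_inj.mp e3
      linarith
    calc ‖(inner ℂ (A x) x : ℂ)‖ ^ 2 ≤ (‖S x‖ * ‖Q x‖) ^ 2 :=
          pow_le_pow_left₀ (norm_nonneg _) hCS 2
      _ = ‖S x‖ ^ 2 * ‖Q x‖ ^ 2 := by ring
      _ ≤ (β + ε) * γ := by
          rw [hSx]
          exact mul_le_mul_of_nonneg_left hQx (by linarith)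
  -- step 2 : Buzano
  have hBB : B * B = T := by
    rw [hB, ← cfc_mul _ _ T Real.continuous_sqrt.continuousOn Real.continuous_sqrt.continuousOn]
    calc cfc (fun t => Real.sqrt t * Real.sqrt t) T = cfc (fun t : ℝ => t) T :=
          cfc_congr fun t ht => Real.mul_self_sqrt (hTspec t ht)
      _ = T := cfc_id' ℝ T
  have hCC : C * C = T' := by
    rw [hC, ← cfc_mul _ _ T' Real.continuous_sqrt.continuousOn Real.continuous_sqrt.continuousOn]
    calc cfc (fun t => Real.sqrt t * Real.sqrt t) T' = cfc (fun t : ℝ => t) T' :=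
          cfc_congr fun t ht => Real.mul_self_sqrt (hT'spec t ht)
      _ = T' := cfc_id' ℝ T'
  have hBx2 : ((‖B x‖ ^ 2 : ℝ) : ℂ) = inner ℂ (T x) x := by
    rw [← hBB, ContinuousLinearMap.mul_apply]
    nth_rewrite 2 [← hBsa.adjoint_eq]
    rw [adjoint_inner_left, inner_self_eq_norm_sq_to_K]
    norm_cast
  have hCx2 : ((‖C x‖ ^ 2 : ℝ) : ℂ) = inner ℂ (T' x) x := by
    rw [← hCC, ContinuousLinearMap.mul_apply]
    nth_rewrite 2 [← hCsa.adjoint_eq]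
    rw [adjoint_inner_left, inner_self_eq_norm_sq_to_K]
    norm_cast
  have hsum : ‖B x‖ ^ 2 + ‖C x‖ ^ 2 ≤ ‖T + T'‖ := by
    have e : ((‖B x‖ ^ 2 + ‖C x‖ ^ 2 : ℝ) : ℂ) = inner ℂ ((T + T') x) x := by
      rw [add_apply, inner_add_left, ← hBx2, ← hCx2]; push_cast; ring
    calc ‖B x‖ ^ 2 + ‖C x‖ ^ 2 = Complex.re (inner ℂ ((T + T') x) x : ℂ) := by
          rw [← e]; simp [← Complex.ofReal_pow]
      _ ≤ ‖(inner ℂ ((T + T') x) x : ℂ)‖ := Complex.re_le_norm _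
      _ ≤ ‖(T + T') x‖ * ‖x‖ := norm_inner_le_norm _ _
      _ ≤ ‖T + T'‖ * ‖x‖ * ‖x‖ := by gcongr; exact le_opNorm _ _
      _ = ‖T + T'‖ := by rw [hx]; ring
  have hBC3 : ‖(inner ℂ (B x) (C x) : ℂ)‖ ≤ nrad (C * B) := by
    have e : (inner ℂ ((C * B) x) x : ℂ) = inner ℂ (B x) (C x) := by
      rw [ContinuousLinearMap.mul_apply]
      nth_rewrite 1 [← hCsa.adjoint_eq]
      rw [adjoint_inner_left]
    rw [← e]
    exact aux_le_nrad (C * B) x hx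
  have hbuz := aux_buzano (B x) (C x) x hx
  have hβγ : β * γ ≤ (1/4) * ‖T + T'‖ + (1/2) * nrad (C * B) := by
    have lhs_eq : ‖(inner ℂ (B x) x : ℂ) * (inner ℂ x (C x) : ℂ)‖ = β * γ := by
      rw [hβ, ← inner_conj_symm, hγ, Complex.conj_ofReal, norm_mul]
      simp [_root_.abs_of_nonneg hβ0, _root_.abs_of_nonneg hγ0]
    rw [lhs_eq] at hbuz
    have hBC2 : ‖B x‖ * ‖C x‖ ≤ (1/2) * ‖T + T'‖ := by
      nlinarith [sq_nonneg (‖B x‖ - ‖C x‖)]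
    linarith
  -- combine
  refine le_of_forall_pos_le_add ?_
  intro ε' hε'
  have hγ1 : (0:ℝ) < γ + 1 := by linarith
  have h1 := step1 (ε' / (γ + 1)) (by positivity)
  have h2 : (β + ε' / (γ + 1)) * γ ≤ β * γ + ε' := by
    have h3 : ε' / (γ + 1) * γ ≤ ε' := by
      rw [div_mul_eq_mul_div, div_le_iff₀ hγ1]
      nlinarith
    nlinarith
  linarith

theorem stmt9 (A : H →L[ℂ] H) :
    (nrad A) ^ 2
      ≤ (1/4) * ‖adjoint A * A + A * adjoint A‖
        + (1/2) * nrad (oabs (adjoint A) * oabs A) := by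
  have hc0 : 0 ≤ (1/4) * ‖adjoint A * A + A * adjoint A‖
      + (1/2) * nrad (oabs (adjoint A) * oabs A) :=
    add_nonneg (by positivity) (mul_nonneg (by norm_num) (aux_nrad_nonneg _))
  rcases subsingleton_or_nontrivial H with hH | hH
  · have hempty : IsEmpty {x : H // ‖x‖ = 1} := by
      refine ⟨fun y => ?_⟩
      have h1 : (y : H) = 0 := Subsingleton.elim _ _
      have := y.2
      rw [h1, norm_zero] at this
      exact one_ne_zero this.symm
    have : nrad A = 0 := by
      rw [nrad, Real.iSup_of_isEmpty]
    rw [this]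
    simpa using hc0
  · set c := (1/4) * ‖adjoint A * A + A * adjoint A‖
      + (1/2) * nrad (oabs (adjoint A) * oabs A) with hcdef
    have h1 : nrad A ≤ Real.sqrt c := by
      refine aux_nrad_le A _ (Real.sqrt_nonneg c) fun x hx => ?_
      rw [Real.le_sqrt (norm_nonneg _) hc0]
      exact aux_main_ineq A x hx
    calc nrad A ^ 2 ≤ Real.sqrt c ^ 2 := pow_le_pow_left₀ (aux_nrad_nonneg A) h1 2
      _ = c := Real.sq_sqrt hc0
end

section
/- Let T be a positive bounded linear operator on a complex Hilbert space H, let x ∈ H with ‖x‖ = 1, and let r ≥ 1. Then ⟨Tx, x⟩^r ≤ ⟨T^r x, x⟩. -/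
open ContinuousLinearMap Complex

variable {H : Type*} [NormedAddCommGroup H] [InnerProductSpace ℂ H] [CompleteSpace H]

lemma tangent {a t r : ℝ} (ha : 0 ≤ a) (ht : 0 ≤ t) (hr : 1 ≤ r) :
    a ^ r + r * a ^ (r - 1) * (t - a) ≤ t ^ r := by
  rcases eq_or_lt_of_le ha with h | h
  · subst h
    rcases eq_or_lt_of_le hr with h1 | h1
    · simp [← h1, Real.rpow_one]
    · rw [Real.zero_rpow (by positivity), Real.zero_rpow (by linarith)]
      simpa using Real.rpow_nonneg ht r
  · set u := t / a with hu
    have hu0 : 0 ≤ u := div_nonneg ht h.le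
    have hs : (-1 : ℝ) ≤ u - 1 := by linarith
    have key := one_add_mul_self_le_rpow_one_add hs hr
    have h2 : a ^ r * (1 + r * (u - 1)) ≤ a ^ r * (1 + (u - 1)) ^ r :=
      mul_le_mul_of_nonneg_left key (Real.rpow_nonneg h.le r)
    have h3 : t ^ r = a ^ r * (1 + (u - 1)) ^ r := by
      rw [show (1 : ℝ) + (u - 1) = u by ring, ← Real.mul_rpow h.le hu0, hu,
        mul_div_cancel₀ _ h.ne']
    have h4 : a ^ (r - 1) = a ^ r / a := by
      rw [Real.rpow_sub h, Real.rpow_one]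
    have h5 : a ^ r + r * a ^ (r - 1) * (t - a) = a ^ r * (1 + r * (u - 1)) := by
      rw [h4, hu]; field_simp
    rw [h3, h5]; exact h2

theorem stmt12 (T : H →L[ℂ] H) (hT : T.IsPositive) (x : H) (hx : ‖x‖ = 1)
    (r : ℝ) (hr : 1 ≤ r) :
    (inner ℂ (T x) x : ℂ).re ^ r ≤ (inner ℂ (opow T r x) x : ℂ).re := by
  have hTsa : IsSelfAdjoint T := hT.isSelfAdjoint
  have hT0 : (0 : H →L[ℂ] H) ≤ T := (nonneg_iff_isPositive T).mpr hT
  set a := (inner ℂ (T x) x : ℂ).re with haa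
  have ha : 0 ≤ a := hT.re_inner_nonneg_left x
  set D := r * a ^ (r - 1) with hD
  set C := a ^ r - D * a with hC
  have hc1 : ContinuousOn (fun t : ℝ => C + D * t) (spectrum ℝ T) :=
    (continuous_const.add (continuous_const.mul continuous_id)).continuousOn
  have hc2 : ContinuousOn (fun t : ℝ => t ^ r) (spectrum ℝ T) := fun t _ =>
    (Real.continuousAt_rpow_const t r (Or.inr (by linarith))).continuousWithinAt
  have key : cfc (fun t : ℝ => C + D * t) T ≤ opow T r := by
    apply cfc_mono ?_ hc1 hc2
    intro t htsp
    have ht : 0 ≤ t := spectrum_nonneg_of_nonneg hT0 htsp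
    have := tangent ha ht hr
    simp only [hC, hD]; nlinarith [this]
  have hrep : cfc (fun t : ℝ => C + D * t) T = algebraMap ℝ (H →L[ℂ] H) C + D • T := by
    rw [cfc_add T (fun _ => C) (fun t => D * t) ((continuous_const (y := C)).continuousOn)
      ((continuous_const.mul continuous_id).continuousOn),
      cfc_const C T, cfc_const_mul D (fun t : ℝ => t) T (continuous_id.continuousOn), cfc_id' ℝ T]
  rw [hrep] at key
  rw [ContinuousLinearMap.le_def] at key
  have h6 := key.re_inner_nonneg_left x
  simp only [sub_apply, inner_sub_left, map_sub, add_apply, inner_add_left, map_add,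
    smul_apply, RCLike.re_to_complex] at h6
  have h7 : (inner ℂ ((algebraMap ℝ (H →L[ℂ] H) C) x) x : ℂ).re = C := by
    rw [Algebra.algebraMap_eq_smul_one]
    have : (C • (1 : H →L[ℂ] H)) x = (C : ℂ) • x := by
      simp [← Complex.coe_smul]
    rw [this, inner_smul_left]
    simp [inner_self_eq_norm_sq_to_K, hx]
  have h8 : (inner ℂ ((D : ℝ) • T x) x : ℂ).re = D * a := by
    rw [show D • T x = (D : ℂ) • T x from (Complex.coe_smul D (T x)).symm, inner_smul_left]
    simp [haa]
  have har : a ^ r = C + D * a := by rw [hC]; ring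
  rw [har]
  rw [h7, h8] at h6
  linarith
end

section
/- Let A and B be bounded linear operators on a complex Hilbert space H and let r ≥ 1. Then w(B*A)^{2r} ≤ (1/2) · ( ‖ |B|²|A|² + |A|²|B|² ‖ / 2 )^r + (1/4) ‖ |B|^{4r} + |A|^{4r} ‖. -/
open ContinuousLinearMap Complex

variable {H : Type*} [NormedAddCommGroup H] [InnerProductSpace ℂ H] [CompleteSpace H]

lemma tangent_rpow {s : ℝ} (hs : 1 ≤ s) {c t : ℝ} (hc : 0 ≤ c) (ht : 0 ≤ t) :
    c ^ s + s * c ^ (s - 1) * (t - c) ≤ t ^ s := by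
  rcases eq_or_lt_of_le hc with rfl | hc
  · rcases eq_or_lt_of_le hs with rfl | hs'
    · simp
    · rw [Real.zero_rpow (by linarith), Real.zero_rpow (by linarith)]
      simpa using Real.rpow_nonneg ht s
  · have hb := one_add_mul_self_le_rpow_one_add
      (s := t / c - 1) (by nlinarith [div_nonneg ht hc.le]) hs
    have h1 : (1 : ℝ) + (t / c - 1) = t / c := by ring
    rw [h1, Real.div_rpow ht hc.le] at hb
    have hcr : (0:ℝ) < c ^ s := Real.rpow_pos_of_pos hc s
    have h2 : (1 + s * (t / c - 1)) * c ^ s ≤ t ^ s := by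
      rw [← le_div_iff₀ hcr] at *; exact hb
    calc c ^ s + s * c ^ (s - 1) * (t - c) = (1 + s * (t / c - 1)) * c ^ s := by
          rw [Real.rpow_sub hc]
          field_simp
          simp only [Real.rpow_one]
      _ ≤ t ^ s := h2

lemma mccarthy {P : H →L[ℂ] H} (hP : 0 ≤ P) {x : H} (hx : ‖x‖ = 1) {s : ℝ} (hs : 1 ≤ s) :
    (RCLike.re (inner ℂ (P x) x : ℂ)) ^ s
      ≤ RCLike.re (inner ℂ (cfc (fun t : ℝ => t ^ s) P x) x : ℂ) := by
  have hPpos : P.IsPositive := (nonneg_iff_isPositive P).mp hP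
  have hPsa : IsSelfAdjoint P := hPpos.isSelfAdjoint
  set c : ℝ := RCLike.re (inner ℂ (P x) x : ℂ) with hc
  have hc0 : 0 ≤ c := hPpos.re_inner_nonneg_left x
  have hcont : Continuous (fun t : ℝ => t ^ s) :=
    Real.continuous_rpow_const (by linarith)
  set α : ℝ := c ^ s - s * c ^ (s - 1) * c with hα
  set β : ℝ := s * c ^ (s - 1) with hβ
  have key : α • (1 : H →L[ℂ] H) + β • P ≤ cfc (fun t : ℝ => t ^ s) P := by
    have h1 : cfc (fun t : ℝ => α + β * t) P ≤ cfc (fun t : ℝ => t ^ s) P := by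
      apply cfc_mono
      · intro t htsp
        have ht : 0 ≤ t := spectrum_nonneg_of_nonneg hP htsp
        have := tangent_rpow hs hc0 ht
        simp only [hα, hβ]
        nlinarith [this]
      · exact (continuous_const.add (continuous_const.mul continuous_id)).continuousOn
      · exact hcont.continuousOn
    calc α • (1 : H →L[ℂ] H) + β • P
        = cfc (fun t : ℝ => α + β * t) P := by
          rw [cfc_add (a := P) (fun _ => α) (fun t => β * t)]
          rw [cfc_const α P, cfc_const_mul_id β P]
          rw [Algebra.algebraMap_eq_smul_one]
      _ ≤ _ := h1
  have hdiff := (nonneg_iff_isPositive _).mp (sub_nonneg.mpr key) |>.re_inner_nonneg_left x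
  have hexp : RCLike.re (inner ℂ ((α • (1 : H →L[ℂ] H) + β • P) x) x : ℂ) = α + β * c := by
    rw [ContinuousLinearMap.add_apply, ContinuousLinearMap.smul_apply, ContinuousLinearMap.smul_apply, ContinuousLinearMap.one_apply, inner_add_left,
      RCLike.real_smul_eq_coe_smul (K := ℂ) α, RCLike.real_smul_eq_coe_smul (K := ℂ) β,
      inner_smul_left, inner_smul_left, map_add]
    simp [RCLike.conj_ofReal, inner_self_eq_norm_sq_to_K, hx, hc]
  have hsub : RCLike.re (inner ℂ ((cfc (fun t : ℝ => t ^ s) P - (α • 1 + β • P)) x) x : ℂ)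
      = RCLike.re (inner ℂ (cfc (fun t : ℝ => t ^ s) P x) x : ℂ) - (α + β * c) := by
    rw [sub_apply, inner_sub_left, map_sub, hexp]
  have hαβc : α + β * c = c ^ s := by simp only [hα, hβ]; ring
  rw [hsub, hαβc] at hdiff
  linarith

lemma inner_adj_symm {S : H →L[ℂ] H} (hS : IsSelfAdjoint S) (y x : H) :
    (inner ℂ (S y) x : ℂ) = inner ℂ y (S x) := by
  conv_lhs => rw [← hS.adjoint_eq]
  exact adjoint_inner_left S x y

lemma buzano_step {u v x : H} (hx : ‖x‖ = 1) {b : ℝ} (hb0 : 0 ≤ b)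
    (hb : (inner ℂ x v : ℂ) = (b : ℝ)) :
    2 * RCLike.re (inner ℂ u x : ℂ) * b ≤ RCLike.re (inner ℂ u v : ℂ) + ‖u‖ * ‖v‖ := by
  have hw2 : ‖((2 * b : ℝ) : ℂ) • x - v‖ ^ 2 = ‖v‖ ^ 2 := by
    rw [@norm_sub_sq ℂ, inner_smul_left, hb, Complex.conj_ofReal,
      show ((2*b:ℝ):ℂ) * ((b:ℝ):ℂ) = ((2*b*b:ℝ):ℂ) by push_cast; ring]
    rw [norm_smul]
    simp only [hx, mul_one, Complex.norm_real, RCLike.re_to_complex, Complex.ofReal_re,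
      Real.norm_eq_abs]
    rw [_root_.abs_of_nonneg (by linarith : (0:ℝ) ≤ 2*b)]
    ring
  have hw : ‖((2 * b : ℝ) : ℂ) • x - v‖ = ‖v‖ := by
    have := congrArg Real.sqrt hw2
    rwa [Real.sqrt_sq (norm_nonneg _), Real.sqrt_sq (norm_nonneg _)] at this
  have hle : RCLike.re (inner ℂ u (((2 * b : ℝ) : ℂ) • x - v) : ℂ) ≤ ‖u‖ * ‖v‖ := by
    calc RCLike.re (inner ℂ u (((2 * b : ℝ) : ℂ) • x - v) : ℂ) ≤ ‖u‖ * ‖_‖ :=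
          re_inner_le_norm u _
      _ = ‖u‖ * ‖v‖ := by rw [hw]
  have hexp : RCLike.re (inner ℂ u (((2 * b : ℝ) : ℂ) • x - v) : ℂ)
      = 2 * b * RCLike.re (inner ℂ u x : ℂ) - RCLike.re (inner ℂ u v : ℂ) := by
    rw [inner_sub_right, inner_smul_right, map_sub]
    simp
  rw [hexp] at hle
  linarith

lemma half_add_rpow {c d r : ℝ} (hc : 0 ≤ c) (hd : 0 ≤ d) (hr : 1 ≤ r) :
    ((c + d) / 2) ^ r ≤ (c ^ r + d ^ r) / 2 := by
  have h := (convexOn_rpow hr).2 (Set.mem_Ici.mpr hc) (Set.mem_Ici.mpr hd)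
    (by norm_num : (0:ℝ) ≤ 1/2) (by norm_num : (0:ℝ) ≤ 1/2) (by norm_num)
  simp only [smul_eq_mul] at h
  calc ((c + d) / 2) ^ r = ((1:ℝ)/2 * c + 1/2 * d) ^ r := by ring_nf
    _ ≤ 1/2 * c ^ r + 1/2 * d ^ r := h
    _ = (c ^ r + d ^ r) / 2 := by ring

lemma rpow_amgm {c d r : ℝ} (hc : 0 ≤ c) (hd : 0 ≤ d) :
    c ^ r * d ^ r ≤ (c ^ (2 * r) + d ^ (2 * r)) / 2 := by
  have h2 := two_mul_le_add_sq (c ^ r) (d ^ r)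
  have hc2 : (c ^ r) ^ (2:ℕ) = c ^ (2 * r) := by
    rw [← Real.rpow_natCast (c ^ r) 2, ← Real.rpow_mul hc]
    norm_num [mul_comm]
  have hd2 : (d ^ r) ^ (2:ℕ) = d ^ (2 * r) := by
    rw [← Real.rpow_natCast (d ^ r) 2, ← Real.rpow_mul hd]
    norm_num [mul_comm]
  nlinarith [h2, hc2, hd2]

lemma adjoint_mul_self_nonneg' (A : H →L[ℂ] H) : (0 : H →L[ℂ] H) ≤ adjoint A * A := by
  rw [← star_eq_adjoint]; exact star_mul_self_nonneg A

lemma opow_oabs_eq (A : H →L[ℂ] H) {r : ℝ} (hr : 1 ≤ r) :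
    opow (oabs A) (4 * r)
      = cfc (fun t : ℝ => t ^ r) ((adjoint A * A) * (adjoint A * A)) := by
  have hP : 0 ≤ adjoint A * A := adjoint_mul_self_nonneg' A
  have hPsa : IsSelfAdjoint (adjoint A * A) :=
    ((nonneg_iff_isPositive _).mp hP).isSelfAdjoint
  have hsp : ∀ t ∈ spectrum ℝ (adjoint A * A), 0 ≤ t :=
    fun t ht => spectrum_nonneg_of_nonneg hP ht
  have hcont4 : Continuous (fun t : ℝ => t ^ (4 * r)) :=
    Real.continuous_rpow_const (by linarith)
  have hcontr : Continuous (fun t : ℝ => t ^ r) :=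
    Real.continuous_rpow_const (by linarith)
  have h1 : opow (oabs A) (4 * r)
      = cfc ((fun t : ℝ => t ^ (4 * r)) ∘ Real.sqrt) (adjoint A * A) :=
    (cfc_comp (fun t : ℝ => t ^ (4 * r)) Real.sqrt (adjoint A * A) hPsa
      hcont4.continuousOn Real.continuous_sqrt.continuousOn).symm
  have h2 : cfc ((fun t : ℝ => t ^ (4 * r)) ∘ Real.sqrt) (adjoint A * A)
      = cfc (fun t : ℝ => (t ^ (2:ℕ)) ^ r) (adjoint A * A) := by
    apply cfc_congr
    intro t ht
    have ht0 : 0 ≤ t := hsp t ht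
    simp only [Function.comp]
    rw [Real.sqrt_eq_rpow, ← Real.rpow_mul ht0, ← Real.rpow_natCast t 2,
      ← Real.rpow_mul ht0]
    norm_num
    rw [show (1:ℝ)/2*(4*r) = 2*r by ring]
  have h3 : cfc (fun t : ℝ => (t ^ (2:ℕ)) ^ r) (adjoint A * A)
      = cfc (fun t : ℝ => t ^ r) ((adjoint A * A) ^ 2) :=
    cfc_comp_pow (fun t : ℝ => t ^ r) 2 (adjoint A * A) hcontr.continuousOn hPsa
  rw [opow, oabs] at h1 ⊢
  rw [h1, h2, h3, sq]

theorem stmt13 (A B : H →L[ℂ] H) (r : ℝ) (hr : 1 ≤ r) :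
    (nrad (adjoint B * A)) ^ (2 * r)
      ≤ (1/2) * (‖(adjoint B * B) * (adjoint A * A) + (adjoint A * A) * (adjoint B * B)‖ / 2) ^ r
        + (1/4) * ‖opow (oabs B) (4 * r) + opow (oabs A) (4 * r)‖ := by
  have hr0 : (0:ℝ) ≤ r := by linarith
  set P : H →L[ℂ] H := adjoint A * A with hPdef
  set Q : H →L[ℂ] H := adjoint B * B with hQdef
  have hP : 0 ≤ P := adjoint_mul_self_nonneg' A
  have hQ : 0 ≤ Q := adjoint_mul_self_nonneg' B
  have hPsa : IsSelfAdjoint P := ((nonneg_iff_isPositive P).mp hP).isSelfAdjoint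
  have hQsa : IsSelfAdjoint Q := ((nonneg_iff_isPositive Q).mp hQ).isSelfAdjoint
  set QA : H →L[ℂ] H := opow (oabs A) (4 * r) with hQAdef
  set QB : H →L[ℂ] H := opow (oabs B) (4 * r) with hQBdef
  clear_value P Q QA QB
  have mccA : ∀ y : H, ‖y‖ = 1 →
      ‖P y‖ ^ (2 * r) ≤ RCLike.re (inner ℂ (QA y) y : ℂ) := by
    intro y hy
    have hPP : 0 ≤ P * P := by
      have := star_mul_self_nonneg P
      rwa [hPsa.star_eq] at this
    have hnorm : ‖P y‖ ^ (2:ℕ) = RCLike.re (inner ℂ ((P * P) y) y : ℂ) := by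
      rw [ContinuousLinearMap.mul_apply, inner_adj_symm hPsa, ← @inner_self_eq_norm_sq ℂ, inner_re_symm]
    have e1 : ‖P y‖ ^ (2 * r) = (‖P y‖ ^ (2:ℕ)) ^ r := by
      rw [← Real.rpow_natCast (‖P y‖) 2, ← Real.rpow_mul (norm_nonneg _)]
      norm_num
    rw [e1, hnorm, hQAdef, opow_oabs_eq A hr, ← hPdef]
    exact mccarthy hPP hy hr
  have mccB : ∀ y : H, ‖y‖ = 1 →
      ‖Q y‖ ^ (2 * r) ≤ RCLike.re (inner ℂ (QB y) y : ℂ) := by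
    intro y hy
    have hQQ : 0 ≤ Q * Q := by
      have := star_mul_self_nonneg Q
      rwa [hQsa.star_eq] at this
    have hnorm : ‖Q y‖ ^ (2:ℕ) = RCLike.re (inner ℂ ((Q * Q) y) y : ℂ) := by
      rw [ContinuousLinearMap.mul_apply, inner_adj_symm hQsa, ← @inner_self_eq_norm_sq ℂ, inner_re_symm]
    have e1 : ‖Q y‖ ^ (2 * r) = (‖Q y‖ ^ (2:ℕ)) ^ r := by
      rw [← Real.rpow_natCast (‖Q y‖) 2, ← Real.rpow_mul (norm_nonneg _)]
      norm_num
    rw [e1, hnorm, hQBdef, opow_oabs_eq B hr, ← hQdef]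
    exact mccarthy hQQ hy hr
  set N : ℝ := ‖Q * P + P * Q‖ with hNdef
  set M : ℝ := (1/2) * (N / 2) ^ r + (1/4) * ‖QB + QA‖ with hMdef
  have hM0 : 0 ≤ M := by
    have : (0:ℝ) ≤ (N / 2) ^ r := Real.rpow_nonneg (by positivity) r
    positivity
  have key : ∀ x : H, ‖x‖ = 1 →
      ‖(inner ℂ ((adjoint B * A) x) x : ℂ)‖ ^ (2 * r) ≤ M := by
    intro x hx
    have h_t : (inner ℂ ((adjoint B * A) x) x : ℂ) = inner ℂ (A x) (B x) := by
      rw [ContinuousLinearMap.mul_apply, adjoint_inner_left]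
    set t : ℝ := ‖(inner ℂ ((adjoint B * A) x) x : ℂ)‖ with htdef
    have ht0 : 0 ≤ t := norm_nonneg _
    have ht1 : t ≤ ‖A x‖ * ‖B x‖ := by
      rw [htdef, h_t]; exact norm_inner_le_norm _ _
    have hab : t ^ (2:ℕ) ≤ (‖A x‖ ^ 2) * (‖B x‖ ^ 2) := by
      nlinarith [ht1, ht0, norm_nonneg (A x), norm_nonneg (B x)]
    have hux : RCLike.re (inner ℂ (P x) x : ℂ) = ‖A x‖ ^ 2 := by
      rw [hPdef, ContinuousLinearMap.mul_apply, adjoint_inner_left, @inner_self_eq_norm_sq ℂ]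
    have hxv : (inner ℂ x (Q x) : ℂ) = ((‖B x‖ ^ 2 : ℝ) : ℂ) := by
      rw [hQdef, ContinuousLinearMap.mul_apply, adjoint_inner_right, inner_self_eq_norm_sq_to_K]
      norm_cast
    have buz : 2 * (‖A x‖ ^ 2) * (‖B x‖ ^ 2)
        ≤ RCLike.re (inner ℂ (P x) (Q x) : ℂ) + ‖P x‖ * ‖Q x‖ := by
      have := buzano_step (u := P x) hx (by positivity) hxv
      rwa [hux] at this
    have hS : 2 * RCLike.re (inner ℂ (P x) (Q x) : ℂ) ≤ N := by
      have h1 : (inner ℂ (P x) (Q x) : ℂ) = inner ℂ ((Q * P) x) x := by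
        rw [← inner_adj_symm hQsa, ContinuousLinearMap.mul_apply]
      have h2 : RCLike.re (inner ℂ ((P * Q) x) x : ℂ)
          = RCLike.re (inner ℂ (P x) (Q x) : ℂ) := by
        rw [ContinuousLinearMap.mul_apply, inner_adj_symm hPsa, inner_re_symm]
      have h3 : RCLike.re (inner ℂ ((Q * P + P * Q) x) x : ℂ) ≤ N := by
        calc RCLike.re (inner ℂ ((Q * P + P * Q) x) x : ℂ)
            ≤ ‖(Q * P + P * Q) x‖ * ‖x‖ := re_inner_le_norm _ _
          _ ≤ ‖Q * P + P * Q‖ * ‖x‖ * ‖x‖ := by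
              gcongr; exact le_opNorm _ x
          _ = N := by rw [hx, hNdef]; ring
      rw [add_apply, inner_add_left, map_add, h2, ← h1] at h3
      linarith
    have stepA : (‖A x‖ ^ 2) * (‖B x‖ ^ 2) ≤ (N / 2 + ‖P x‖ * ‖Q x‖) / 2 := by
      linarith
    have hN0 : 0 ≤ N / 2 := by positivity
    have huv0 : 0 ≤ ‖P x‖ * ‖Q x‖ := by positivity
    have stepB : t ^ (2 * r) ≤ ((N / 2) ^ r + (‖P x‖ * ‖Q x‖) ^ r) / 2 := by
      have e1 : t ^ (2 * r) = (t ^ (2:ℕ)) ^ r := by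
        rw [← Real.rpow_natCast t 2, ← Real.rpow_mul ht0]
        norm_num
      rw [e1]
      calc (t ^ (2:ℕ)) ^ r ≤ ((N / 2 + ‖P x‖ * ‖Q x‖) / 2) ^ r := by
            apply Real.rpow_le_rpow (by positivity) _ hr0
            calc (t ^ (2:ℕ) : ℝ) ≤ (‖A x‖ ^ 2) * (‖B x‖ ^ 2) := hab
              _ ≤ _ := stepA
        _ ≤ ((N / 2) ^ r + (‖P x‖ * ‖Q x‖) ^ r) / 2 := half_add_rpow hN0 huv0 hr
    have stepE : RCLike.re (inner ℂ (QB x) x : ℂ) + RCLike.re (inner ℂ (QA x) x : ℂ)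
        ≤ ‖QB + QA‖ := by
      calc RCLike.re (inner ℂ (QB x) x : ℂ) + RCLike.re (inner ℂ (QA x) x : ℂ)
          = RCLike.re (inner ℂ ((QB + QA) x) x : ℂ) := by
            rw [add_apply, inner_add_left, map_add]
        _ ≤ ‖(QB + QA) x‖ * ‖x‖ := re_inner_le_norm _ _
        _ ≤ ‖QB + QA‖ * ‖x‖ * ‖x‖ := by gcongr; exact le_opNorm _ x
        _ = ‖QB + QA‖ := by rw [hx]; ring
    have stepC : (‖P x‖ * ‖Q x‖) ^ r ≤ ‖QB + QA‖ / 2 := by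
      have e1 : (‖P x‖ * ‖Q x‖) ^ r = ‖P x‖ ^ r * ‖Q x‖ ^ r :=
        Real.mul_rpow (norm_nonneg _) (norm_nonneg _)
      have e2 : ‖P x‖ ^ r * ‖Q x‖ ^ r ≤ (‖P x‖ ^ (2*r) + ‖Q x‖ ^ (2*r)) / 2 :=
        rpow_amgm (norm_nonneg _) (norm_nonneg _)
      have e3 := mccA x hx
      have e4 := mccB x hx
      rw [e1]
      linarith
    calc t ^ (2 * r) ≤ ((N / 2) ^ r + (‖P x‖ * ‖Q x‖) ^ r) / 2 := stepB
      _ ≤ ((N / 2) ^ r + ‖QB + QA‖ / 2) / 2 := by linarith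
      _ = M := by rw [hMdef]; ring
  have h2r : (0:ℝ) < 2 * r := by linarith
  have key2 : ∀ x : {x : H // ‖x‖ = 1},
      ‖(inner ℂ ((adjoint B * A) (x:H)) (x:H) : ℂ)‖ ≤ M ^ (1/(2*r)) := by
    intro x
    have hk := key x x.2
    have ht0 : (0:ℝ) ≤ ‖(inner ℂ ((adjoint B * A) (x:H)) (x:H) : ℂ)‖ := norm_nonneg _
    calc ‖(inner ℂ ((adjoint B * A) (x:H)) (x:H) : ℂ)‖
        = (‖(inner ℂ ((adjoint B * A) (x:H)) (x:H) : ℂ)‖ ^ (2*r)) ^ (1/(2*r)) := by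
          rw [← Real.rpow_mul ht0, show (2*r) * (1/(2*r)) = 1 by field_simp,
            Real.rpow_one]
      _ ≤ M ^ (1/(2*r)) :=
          Real.rpow_le_rpow (Real.rpow_nonneg ht0 _) hk (by positivity)
  have hsup : nrad (adjoint B * A) ≤ M ^ (1/(2*r)) := by
    unfold nrad
    exact Real.iSup_le key2 (Real.rpow_nonneg hM0 _)
  have hn0 : 0 ≤ nrad (adjoint B * A) := by
    unfold nrad
    exact Real.iSup_nonneg (fun x => norm_nonneg _)
  calc (nrad (adjoint B * A)) ^ (2 * r) ≤ (M ^ (1/(2*r))) ^ (2*r) :=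
        Real.rpow_le_rpow hn0 hsup h2r.le
    _ = M := by
        rw [← Real.rpow_mul hM0, show (1/(2*r)) * (2*r) = 1 by field_simp,
          Real.rpow_one]
    _ = _ := by rw [hMdef, hNdef, hQAdef, hQBdef, hPdef, hQdef]
end

section
/- Let A, X, Y be bounded linear operators on a complex Hilbert space H with ‖X‖ ≤ 1 and ‖Y‖ ≤ 1. Then w(AX + YA) ≤ √2 · ‖AA* + A*A‖^{1/2}, and likewise w(AX − YA) ≤ √2 · ‖AA* + A*A‖^{1/2}. -/
open ContinuousLinearMap Complex

variable {H : Type*} [NormedAddCommGroup H] [InnerProductSpace ℂ H] [CompleteSpace H]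

lemma key1 (A X : H →L[ℂ] H) (hX : ‖X‖ ≤ 1) (x : H) (hx : ‖x‖ = 1) :
    ‖(inner ℂ ((A * X) x) x : ℂ)‖ ≤ ‖adjoint A x‖ := by
  have h1 : (inner ℂ ((A * X) x) x : ℂ) = inner ℂ (X x) (adjoint A x) := by
    rw [ContinuousLinearMap.mul_apply]; exact (adjoint_inner_right A (X x) x).symm
  rw [h1]
  calc ‖(inner ℂ (X x) (adjoint A x) : ℂ)‖ ≤ ‖X x‖ * ‖adjoint A x‖ := norm_inner_le_norm _ _
    _ ≤ 1 * ‖adjoint A x‖ := by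
        gcongr
        calc ‖X x‖ ≤ ‖X‖ * ‖x‖ := le_opNorm X x
          _ ≤ 1 * 1 := by rw [hx]; gcongr
          _ = 1 := one_mul 1
    _ = ‖adjoint A x‖ := one_mul _

lemma key2 (A Y : H →L[ℂ] H) (hY : ‖Y‖ ≤ 1) (x : H) (hx : ‖x‖ = 1) :
    ‖(inner ℂ ((Y * A) x) x : ℂ)‖ ≤ ‖A x‖ := by
  have h1 : (inner ℂ ((Y * A) x) x : ℂ) = inner ℂ (A x) (adjoint Y x) := by
    rw [ContinuousLinearMap.mul_apply]; exact (adjoint_inner_right Y (A x) x).symm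
  rw [h1]
  calc ‖(inner ℂ (A x) (adjoint Y x) : ℂ)‖ ≤ ‖A x‖ * ‖adjoint Y x‖ := norm_inner_le_norm _ _
    _ ≤ ‖A x‖ * 1 := by
        gcongr
        calc ‖adjoint Y x‖ ≤ ‖adjoint Y‖ * ‖x‖ := le_opNorm _ x
          _ ≤ 1 * 1 := by
              rw [hx]
              gcongr
              rw [LinearIsometryEquiv.norm_map adjoint Y]
              exact hY
          _ = 1 := one_mul 1
    _ = ‖A x‖ := mul_one _

lemma key3 (A : H →L[ℂ] H) (x : H) (hx : ‖x‖ = 1) :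
    ‖adjoint A x‖ ^ 2 + ‖A x‖ ^ 2 ≤ ‖A * adjoint A + adjoint A * A‖ := by
  set S := A * adjoint A + adjoint A * A with hS
  have e1 : (inner ℂ x (A (adjoint A x)) : ℂ) = inner ℂ (adjoint A x) (adjoint A x) := by
    have := adjoint_inner_right (adjoint A) x (adjoint A x)
    rwa [adjoint_adjoint] at this
  have e2 : (inner ℂ x (adjoint A (A x)) : ℂ) = inner ℂ (A x) (A x) :=
    adjoint_inner_right A x (A x)
  have h1 : (inner ℂ x (S x) : ℂ) = ((‖adjoint A x‖ ^ 2 + ‖A x‖ ^ 2 : ℝ) : ℂ) := by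
    rw [hS]
    simp only [ContinuousLinearMap.add_apply, ContinuousLinearMap.mul_apply, inner_add_right, e1, e2,
      inner_self_eq_norm_sq_to_K]
    norm_num [RCLike.ofReal_alg]
  have h2 : (‖adjoint A x‖ ^ 2 + ‖A x‖ ^ 2 : ℝ) = ‖(inner ℂ x (S x) : ℂ)‖ := by
    rw [h1, Complex.norm_real]
    exact (Real.norm_of_nonneg (by positivity)).symm
  rw [h2]
  calc ‖(inner ℂ x (S x) : ℂ)‖ ≤ ‖x‖ * ‖S x‖ := norm_inner_le_norm _ _
    _ ≤ ‖x‖ * (‖S‖ * ‖x‖) := by gcongr; exact le_opNorm S x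
    _ = ‖S‖ := by rw [hx]; ring

lemma keysum (A : H →L[ℂ] H) (x : H) (hx : ‖x‖ = 1) :
    ‖adjoint A x‖ + ‖A x‖ ≤ Real.sqrt 2 * Real.sqrt ‖A * adjoint A + adjoint A * A‖ := by
  have h3 := key3 A x hx
  have h4 : ‖adjoint A x‖ + ‖A x‖ ≤ Real.sqrt (2 * (‖adjoint A x‖ ^ 2 + ‖A x‖ ^ 2)) := by
    rw [show ‖adjoint A x‖ + ‖A x‖ = Real.sqrt ((‖adjoint A x‖ + ‖A x‖) ^ 2) from
      (Real.sqrt_sq (by positivity)).symm]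
    apply Real.sqrt_le_sqrt
    nlinarith [sq_nonneg (‖adjoint A x‖ - ‖A x‖)]
  calc ‖adjoint A x‖ + ‖A x‖ ≤ Real.sqrt (2 * (‖adjoint A x‖ ^ 2 + ‖A x‖ ^ 2)) := h4
    _ = Real.sqrt 2 * Real.sqrt (‖adjoint A x‖ ^ 2 + ‖A x‖ ^ 2) := Real.sqrt_mul (by norm_num) _
    _ ≤ Real.sqrt 2 * Real.sqrt ‖A * adjoint A + adjoint A * A‖ := by
        gcongr

theorem stmt14 (A X Y : H →L[ℂ] H) (hX : ‖X‖ ≤ 1) (hY : ‖Y‖ ≤ 1) :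
    nrad (A * X + Y * A) ≤ Real.sqrt 2 * Real.sqrt ‖A * adjoint A + adjoint A * A‖
      ∧ nrad (A * X - Y * A) ≤ Real.sqrt 2 * Real.sqrt ‖A * adjoint A + adjoint A * A‖ := by
  set C := Real.sqrt 2 * Real.sqrt ‖A * adjoint A + adjoint A * A‖ with hC
  have hC0 : 0 ≤ C := by positivity
  by_cases hne : Nonempty {x : H // ‖x‖ = 1}
  · constructor
    · apply ciSup_le
      rintro ⟨x, hx⟩
      calc ‖(inner ℂ ((A * X + Y * A) x) x : ℂ)‖
          ≤ ‖(inner ℂ ((A * X) x) x : ℂ)‖ + ‖(inner ℂ ((Y * A) x) x : ℂ)‖ := by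
            rw [ContinuousLinearMap.add_apply, inner_add_left]; exact norm_add_le _ _
        _ ≤ ‖adjoint A x‖ + ‖A x‖ := add_le_add (key1 A X hX x hx) (key2 A Y hY x hx)
        _ ≤ C := keysum A x hx
    · apply ciSup_le
      rintro ⟨x, hx⟩
      calc ‖(inner ℂ ((A * X - Y * A) x) x : ℂ)‖
          ≤ ‖(inner ℂ ((A * X) x) x : ℂ)‖ + ‖(inner ℂ ((Y * A) x) x : ℂ)‖ := by
            rw [ContinuousLinearMap.sub_apply, inner_sub_left]; exact norm_sub_le _ _
        _ ≤ ‖adjoint A x‖ + ‖A x‖ := add_le_add (key1 A X hX x hx) (key2 A Y hY x hx)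
        _ ≤ C := keysum A x hx
  · have : IsEmpty {x : H // ‖x‖ = 1} := not_nonempty_iff.mp hne
    constructor <;> · rw [nrad, Real.iSup_of_isEmpty]; exact hC0
end
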